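/- arXiv:1412.6161 — 5 statements merged into one kernel-verified Lean document; each statement's English description precedes it below -/
import Mathlib

section
/- Let $A_1, \ldots, A_M$ be Schur stable (spectral radius $< 1$) diagonalizable real $N \times N$ matrices with eigendecompositions $A_i = V_i D_i V_i^{-1}$, and let $\mathcal{G}$ be a switching digraph with edge weights $\omega^+_{ij} = \ln\|V_j^{-1} V_i\|$ and $\omega^-_{ij} = -\ln \rho_i > 0$, where $\rho_i$ is the spectral radius of $A_i$. If the dwell time $\tau$ satisfies $\tau > \nu(\mathcal{G})$, the maximum cycle ratio of $\mathcal{G}$, then for every switching signal respecting $\mathcal{G}$ with all intervals $t_k - t_{k-1} \ge \tau$, the solution of $x(t+1) = A_{\sigma(t)} x(t)$ satisfies $x(t) \to 0$ as $t \to \infty$. -/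
set_option maxHeartbeats 1000000


open scoped Matrix.Norms.L2Operator

/-- A cycle, represented by the list of its distinct vertices; every consecutive pair,
including the wrap-around pair, is a directed edge. -/
def IsCycleList {V : Type*} (E : V → V → Prop) (c : List V) : Prop :=
  c ≠ [] ∧ c.Nodup ∧ ∀ p ∈ c.zip (c.rotate 1), E p.1 p.2

/-- The weight of a cycle: the sum of its edge weights, including the wrap-around edge. -/
def cycleWeight {V : Type*} (ω : V → V → ℝ) (c : List V) : ℝ :=
  ((c.zip (c.rotate 1)).map fun p => ω p.1 p.2).sum

section ListAux
variable {α : Type*}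

lemma my_zip_range' (g : ℕ → α) : ∀ (m a : ℕ),
    (((List.range' a m).map g).zip (((List.range' (a+1) m)).map g))
      = (List.range' a m).map (fun j => (g j, g (j+1))) := by
  intro m
  induction m with
  | zero => intro a; simp
  | succ m ih =>
    intro a
    rw [List.range'_succ, List.range'_succ]
    simp only [List.map_cons, List.zip_cons_cons, ih (a+1), List.map_cons]

lemma my_rotate_map_range' (g : ℕ → α) (m a : ℕ) (h : g (a + m) = g a) :
    ((List.range' a m).map g).rotate 1 = (List.range' (a+1) m).map g := by
  cases m with
  | zero => simp
  | succ m =>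
    rw [List.range'_succ, List.map_cons, List.rotate_cons_succ, List.rotate_zero]
    rw [List.range'_concat, List.map_append]
    simp only [List.map_cons, List.map_nil]
    congr 1
    simp only [List.cons.injEq, List.nil_eq, and_true]
    rw [← h]
    congr 1
    omega

lemma my_list_range'_sum (F : ℕ → ℝ) : ∀ (m a : ℕ),
    ((List.range' a m).map F).sum = ∑ j ∈ Finset.range m, F (a + j) := by
  intro m
  induction m with
  | zero => intro a; simp
  | succ m ih =>
    intro a
    rw [List.range'_succ, List.map_cons, List.sum_cons, ih (a+1), Finset.sum_range_succ']
    simp only [add_zero]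
    rw [add_comm]
    congr 1
    apply Finset.sum_congr rfl
    intro j _
    congr 1
    omega

lemma my_sum_split (g h : α → ℝ) (c : ℝ) : ∀ l : List α,
    (l.map (fun p => g p + c * h p)).sum = (l.map g).sum + c * (l.map h).sum := by
  intro l
  induction l with
  | nil => simp
  | cons a l ih => simp [ih]; ring

end ListAux

/-- Key combinatorial lemma: along an infinite walk in a graph all of whose simple cycles have
weight at most `-δ`, the partial sums decay linearly. -/
lemma my_walk_bound {M : ℕ} (E : Fin M → Fin M → Prop) (f : Fin M → Fin M → ℝ) (K δ : ℝ)
    (hK0 : 0 ≤ K) (hK : ∀ i j, f i j ≤ K) (hδ : 0 ≤ δ)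
    (hcyc : ∀ C, IsCycleList E C → cycleWeight f C ≤ -δ) :
    ∀ n (w : ℕ → Fin M), (∀ j, E (w j) (w (j+1))) →
      ∑ j ∈ Finset.range n, f (w j) (w (j+1)) ≤ M * K - δ * ((n / M : ℕ) : ℝ) := by
  classical
  intro n
  induction n using Nat.strong_induction_on with
  | _ n ih =>
  intro w hE
  by_cases hnM : n < M
  · have h1 : ∑ j ∈ Finset.range n, f (w j) (w (j+1)) ≤ n * K := by
      calc ∑ j ∈ Finset.range n, f (w j) (w (j+1)) ≤ ∑ _j ∈ Finset.range n, K :=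
            Finset.sum_le_sum (fun j _ => hK _ _)
        _ = n * K := by simp [mul_comm]
    have h2 : (n : ℝ) * K ≤ M * K := by
      apply mul_le_mul_of_nonneg_right _ hK0
      exact_mod_cast hnM.le
    rw [Nat.div_eq_of_lt hnM]
    simpa using h1.trans h2
  · push_neg at hnM
    have hM : 0 < M := by
      rcases Nat.eq_zero_or_pos M with h | h
      · subst h; exact absurd (w 0).isLt (by omega)
      · exact h
    obtain ⟨a0, b0, hne, heq⟩ := Fintype.exists_ne_map_eq_of_card_lt
      (fun i : Fin (M+1) => w i) (by simp)
    have hpq : ∃ q, ∃ a, a < q ∧ q ≤ M ∧ w a = w q := by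
      rcases lt_or_gt_of_ne hne with h | h
      · exact ⟨b0, a0, by exact_mod_cast h, by omega, heq⟩
      · exact ⟨a0, b0, by exact_mod_cast h, by omega, heq.symm⟩
    obtain ⟨q, aq, haq, hqM, hwq⟩ := hpq
    have hPq : ∃ b, (∃ a, a < b ∧ w a = w b) := ⟨q, aq, haq, hwq⟩
    set b := Nat.find hPq with hbdef
    obtain ⟨a, hab, hw⟩ := Nat.find_spec hPq
    have hbmin : ∀ m < b, ¬ ∃ a, a < m ∧ w a = w m := fun m hm => Nat.find_min hPq hm
    have hbq : b ≤ q := Nat.find_min' hPq ⟨aq, haq, hwq⟩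
    have hbM : b ≤ M := hbq.trans hqM
    set c := b - a with hcdef
    have hc1 : 1 ≤ c := by omega
    have hac : a + c = b := by omega
    have hwac : w (a + c) = w a := by rw [hac, ← hw]
    set C : List (Fin M) := (List.range' a c).map w with hCdef
    have hzip : C.zip (C.rotate 1) = (List.range' a c).map (fun j => (w j, w (j+1))) := by
      rw [hCdef, my_rotate_map_range' w c a hwac, my_zip_range']
    have hnodup : C.Nodup := by
      apply List.Nodup.map_on _ (List.nodup_range' (s := a) (n := c))
      intro p hp r hr hpr
      rw [List.mem_range'_1] at hp hr
      by_contra hne2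
      rcases lt_or_gt_of_ne hne2 with h | h
      · exact hbmin r (by omega) ⟨p, h, hpr⟩
      · exact hbmin p (by omega) ⟨r, h, hpr.symm⟩
    have hCyc : IsCycleList E C := by
      refine ⟨by simp [hCdef]; omega, hnodup, ?_⟩
      intro p hp
      rw [hzip] at hp
      obtain ⟨j, _, rfl⟩ := List.mem_map.mp hp
      exact hE j
    have hCW : cycleWeight f C ≤ -δ := hcyc C hCyc
    have hCW' : cycleWeight f C = ∑ j ∈ Finset.range c, f (w (a+j)) (w (a+j+1)) := by
      rw [cycleWeight, hzip, List.map_map]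
      exact my_list_range'_sum _ c a
    set w' : ℕ → Fin M := fun j => if j < a then w j else w (j + c) with hw'def
    have hw'le : ∀ j ≤ a, w' j = w j := by
      intro j hj
      by_cases h : j < a
      · simp [hw'def, h]
      · have : j = a := by omega
        subst this
        simp [hw'def, hwac]
    have hE' : ∀ j, E (w' j) (w' (j+1)) := by
      intro j
      by_cases h : j + 1 ≤ a
      · rw [hw'le j (by omega), hw'le (j+1) h]; exact hE j
      · by_cases h2 : j < a
        · omega
        · have e1 : w' j = w (j + c) := by simp [hw'def, h2]
          have e2 : w' (j+1) = w (j + c + 1) := by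
            have h1 : ¬ (j + 1 < a) := by omega
            have h2' : j + 1 + c = j + c + 1 := by omega
            simp only [hw'def, if_neg h1, h2']
          rw [e1, e2]
          exact hE (j + c)
    set n' := n - c with hn'def
    have hn'lt : n' < n := by omega
    have han' : a ≤ n' := by omega
    have hsplit : ∑ j ∈ Finset.range n, f (w j) (w (j+1))
        = (∑ j ∈ Finset.range n', f (w' j) (w' (j+1)))
          + ∑ j ∈ Finset.range c, f (w (a+j)) (w (a+j+1)) := by
      have hd1 : ∑ j ∈ Finset.range n, f (w j) (w (j+1))
          = (∑ j ∈ Finset.range a, f (w j) (w (j+1)))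
            + (∑ j ∈ Finset.Ico a b, f (w j) (w (j+1)))
            + ∑ j ∈ Finset.Ico b n, f (w j) (w (j+1)) := by
        rw [Finset.range_eq_Ico, ← Finset.sum_Ico_consecutive _ (Nat.zero_le b) (by omega : b ≤ n),
          ← Finset.sum_Ico_consecutive _ (Nat.zero_le a) (by omega : a ≤ b),
          ← Finset.range_eq_Ico]
      have hd2 : ∑ j ∈ Finset.range n', f (w' j) (w' (j+1))
          = (∑ j ∈ Finset.range a, f (w' j) (w' (j+1)))
            + ∑ j ∈ Finset.Ico a n', f (w' j) (w' (j+1)) := by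
        rw [Finset.range_eq_Ico, ← Finset.sum_Ico_consecutive _ (Nat.zero_le a) han',
          ← Finset.range_eq_Ico]
      have he1 : ∑ j ∈ Finset.range a, f (w' j) (w' (j+1))
          = ∑ j ∈ Finset.range a, f (w j) (w (j+1)) := by
        apply Finset.sum_congr rfl
        intro j hj
        rw [Finset.mem_range] at hj
        rw [hw'le j (by omega), hw'le (j+1) (by omega)]
      have he2 : ∑ j ∈ Finset.Ico a n', f (w' j) (w' (j+1))
          = ∑ j ∈ Finset.Ico b n, f (w j) (w (j+1)) := by
        rw [Finset.sum_Ico_eq_sum_range, Finset.sum_Ico_eq_sum_range]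
        have hlen : n' - a = n - b := by omega
        rw [hlen]
        apply Finset.sum_congr rfl
        intro j _
        have g1 : w' (a + j) = w (b + j) := by
          rcases Nat.eq_zero_or_pos j with rfl | hj
          · rw [Nat.add_zero, Nat.add_zero, hw'le a le_rfl, ← hw]
          · have h1 : ¬ (a + j < a) := by omega
            have h2 : a + j + c = b + j := by omega
            simp only [hw'def, if_neg h1, h2]
        have g2 : w' (a + j + 1) = w (b + j + 1) := by
          have h1 : ¬ (a + j + 1 < a) := by omega
          have h2 : a + j + 1 + c = b + j + 1 := by omega
          simp only [hw'def, if_neg h1, h2]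
        rw [g1, g2]
      have he3 : ∑ j ∈ Finset.Ico a b, f (w j) (w (j+1))
          = ∑ j ∈ Finset.range c, f (w (a+j)) (w (a+j+1)) := by
        rw [Finset.sum_Ico_eq_sum_range]
      rw [hd1, hd2, he1, he2, he3]
      ring
    have hIH := ih n' hn'lt w' hE'
    have hdivs : (n / M : ℕ) ≤ (n' / M : ℕ) + 1 := by
      have h1 : n ≤ n' + M := by omega
      calc n / M ≤ (n' + M) / M := Nat.div_le_div_right h1
        _ = n' / M + 1 := Nat.add_div_right _ hM
    have hdiv' : δ * ((n / M : ℕ) : ℝ) ≤ δ * ((n' / M : ℕ) : ℝ) + δ := by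
      have : ((n / M : ℕ) : ℝ) ≤ ((n' / M : ℕ) : ℝ) + 1 := by exact_mod_cast hdivs
      nlinarith
    rw [hsplit]
    have : ∑ j ∈ Finset.range c, f (w (a+j)) (w (a+j+1)) ≤ -δ := by rw [← hCW']; exact hCW
    linarith

section MatAux

open Matrix

/-- The norm of a complex vector viewed in `EuclideanSpace`. -/
noncomputable def en {n : ℕ} (v : Fin n → ℂ) : ℝ := ‖(WithLp.equiv 2 (Fin n → ℂ)).symm v‖

lemma en_nonneg {n : ℕ} (v : Fin n → ℂ) : 0 ≤ en v := norm_nonneg _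

lemma en_mulVec_le {n : ℕ} (B : Matrix (Fin n) (Fin n) ℂ) (v : Fin n → ℂ) :
    en (B *ᵥ v) ≤ ‖B‖ * en v :=
  Matrix.l2_opNorm_mulVec B ((WithLp.equiv 2 (Fin n → ℂ)).symm v)

lemma en_coord_le {n : ℕ} (v : Fin n → ℂ) (j : Fin n) : ‖v j‖ ≤ en v := by
  have h := EuclideanSpace.norm_eq ((WithLp.equiv 2 (Fin n → ℂ)).symm v)
  rw [en, h]
  have h1 : ‖v j‖ = Real.sqrt (‖v j‖ ^ 2) := (Real.sqrt_sq (norm_nonneg _)).symm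
  rw [h1]
  apply Real.sqrt_le_sqrt
  exact Finset.single_le_sum (f := fun i => ‖v i‖ ^ 2) (fun i _ => by positivity)
    (Finset.mem_univ j)

lemma my_diag_norm_le {n : ℕ} (d : Fin n → ℂ) (c : ℝ) (hc : 0 ≤ c) (h : ∀ j, ‖d j‖ ≤ c) :
    ‖Matrix.diagonal d‖ ≤ c := by
  rw [Matrix.l2_opNorm_def]
  apply ContinuousLinearMap.opNorm_le_bound _ hc
  intro x
  have e1 : ((Matrix.toEuclideanLin.trans LinearMap.toContinuousLinearMap)
      (Matrix.diagonal d)) x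
      = (WithLp.equiv 2 (Fin n → ℂ)).symm
          (Matrix.diagonal d *ᵥ (WithLp.equiv 2 (Fin n → ℂ)) x) := rfl
  rw [e1]
  rw [EuclideanSpace.norm_eq, EuclideanSpace.norm_eq]
  have hsum : ∑ i, ‖((WithLp.equiv 2 (Fin n → ℂ)).symm
        (Matrix.diagonal d *ᵥ (WithLp.equiv 2 (Fin n → ℂ)) x)) i‖ ^ 2
      ≤ c ^ 2 * ∑ i, ‖x i‖ ^ 2 := by
    rw [Finset.mul_sum]
    apply Finset.sum_le_sum
    intro i _
    have e2 : ((WithLp.equiv 2 (Fin n → ℂ)).symm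
        (Matrix.diagonal d *ᵥ (WithLp.equiv 2 (Fin n → ℂ)) x)) i
        = d i * (x i) := by
      show (Matrix.diagonal d *ᵥ (WithLp.equiv 2 (Fin n → ℂ)) x) i = _
      rw [Matrix.mulVec_diagonal]
      rfl
    rw [e2, norm_mul, mul_pow]
    have h3 : ‖d i‖ ^ 2 ≤ c ^ 2 := by nlinarith [norm_nonneg (d i), h i]
    exact mul_le_mul_of_nonneg_right h3 (by positivity)
  calc Real.sqrt (∑ i, ‖((WithLp.equiv 2 (Fin n → ℂ)).symm
        (Matrix.diagonal d *ᵥ (WithLp.equiv 2 (Fin n → ℂ)) x)) i‖ ^ 2)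
      ≤ Real.sqrt (c ^ 2 * ∑ i, ‖x i‖ ^ 2) := Real.sqrt_le_sqrt hsum
    _ = c * Real.sqrt (∑ i, ‖x i‖ ^ 2) := by
        rw [Real.sqrt_mul (by positivity), Real.sqrt_sq hc]

lemma my_lift_mulVec {n : ℕ} (A : Matrix (Fin n) (Fin n) ℝ) (xv : Fin n → ℝ) :
    (fun j => ((A *ᵥ xv) j : ℂ)) = (A.map Complex.ofReal) *ᵥ (fun j => (xv j : ℂ)) := by
  funext j
  simp [Matrix.mulVec, dotProduct, Matrix.map_apply]

lemma my_diag_entry_le {N : ℕ} (hN : 0 < N) (A : Matrix (Fin N) (Fin N) ℝ)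
    (V D : Matrix (Fin N) (Fin N) ℂ) (hV : IsUnit V) (hD : D.IsDiag)
    (hdec : A.map Complex.ofReal = V * D * V⁻¹) (j : Fin N) :
    ‖D j j‖ ≤ (spectralRadius ℂ (A.map Complex.ofReal)).toReal := by
  haveI : Nonempty (Fin N) := ⟨⟨0, hN⟩⟩
  obtain ⟨u, hu⟩ := hV
  have hspec : spectrum ℂ (A.map Complex.ofReal) = spectrum ℂ D := by
    rw [hdec, ← hu, ← Matrix.coe_units_inv u, spectrum.units_conjugate]
  have hmem : D j j ∈ spectrum ℂ D := by
    rw [spectrum.mem_iff]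
    intro hunit
    rw [Matrix.isUnit_iff_isUnit_det] at hunit
    have hEq : algebraMap ℂ (Matrix (Fin N) (Fin N) ℂ) (D j j) - D
        = Matrix.diagonal (fun k => D j j - D k k) := by
      ext p q
      by_cases h : p = q
      · subst h
        simp [Matrix.algebraMap_matrix_apply]
      · simp [Matrix.algebraMap_matrix_apply, h, hD h]
    rw [hEq, Matrix.det_diagonal] at hunit
    have : (∏ k, (D j j - D k k)) = 0 :=
      Finset.prod_eq_zero (Finset.mem_univ j) (by ring)
    rw [this] at hunit
    exact hunit.ne_zero rfl
  have h1 : (‖D j j‖₊ : ENNReal) ≤ spectralRadius ℂ D := by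
    unfold spectralRadius
    exact le_iSup₂ (f := fun k (_ : k ∈ spectrum ℂ D) => (‖k‖₊ : ENNReal)) (D j j) hmem
  haveI : Nontrivial (Matrix (Fin N) (Fin N) ℂ) := by
    refine ⟨0, 1, fun h => ?_⟩
    have := congrFun (congrFun h j) j
    simp at this
  have h2 : spectralRadius ℂ D ≠ ⊤ := by
    refine ne_top_of_le_ne_top ?_ (spectrum.spectralRadius_le_nnnorm D)
    exact ENNReal.coe_ne_top
  have h3 := ENNReal.toReal_mono h2 h1
  have hsr : spectralRadius ℂ (A.map Complex.ofReal) = spectralRadius ℂ D := by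
    unfold spectralRadius
    rw [hspec]
  rw [hsr]
  simpa using h3

end MatAux

open Matrix

/-- Graph-based minimum dwell time theorem (non-defective case).  The subsystem matrices
`Aᵢ` are Schur stable and diagonalizable, `Aᵢ = Vᵢ Dᵢ Vᵢ⁻¹` over `ℂ`, with spectral radii
`ρᵢ ∈ (0,1)`.  The switching graph has weights `ω⁺ᵢⱼ = ln ‖Vⱼ⁻¹ Vᵢ‖` (spectral norm) and
`ω⁻ᵢⱼ = -ln ρᵢ > 0`.  If the dwell time `τ` exceeds the maximum cycle ratio `ν(𝒢)`, then
every solution of the switched system, for a switching signal respecting `𝒢` with all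
switching intervals at least `τ`, converges to zero. -/
theorem min_dwell_time_stability_nondefective
    {N M : ℕ} (A : Fin M → Matrix (Fin N) (Fin N) ℝ)
    (V D : Fin M → Matrix (Fin N) (Fin N) ℂ) (ρ : Fin M → ℝ)
    (hVunit : ∀ i, IsUnit (V i))
    (hDdiag : ∀ i, (D i).IsDiag)
    (hdecomp : ∀ i, (A i).map Complex.ofReal = V i * D i * (V i)⁻¹)
    (hρ : ∀ i, ρ i = (spectralRadius ℂ ((A i).map Complex.ofReal)).toReal)
    (hρpos : ∀ i, 0 < ρ i) (hSchur : ∀ i, ρ i < 1)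
    (E : Fin M → Fin M → Prop)
    (ν τ : ℝ)
    (hν : IsGreatest {r : ℝ | ∃ C, IsCycleList E C ∧
            r = cycleWeight (fun i j => Real.log ‖(V j)⁻¹ * V i‖) C /
                cycleWeight (fun i _ => -Real.log (ρ i)) C} ν)
    (hτ : ν < τ)
    (s : ℕ → Fin M) (t : ℕ → ℕ)
    (ht0 : t 0 = 0) (htmono : StrictMono t)
    (hdwell : ∀ k, τ ≤ ((t (k + 1) - t k : ℕ) : ℝ))
    (hrespect : ∀ k, E (s (k + 1)) (s (k + 2)))
    (σ : ℕ → Fin M)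
    (hσ : ∀ k u, t k ≤ u → u < t (k + 1) → σ u = s (k + 1))
    (x : ℕ → Fin N → ℝ)
    (hx : ∀ u, x (u + 1) = (A (σ u)).mulVec (x u)) :
    Filter.Tendsto x Filter.atTop (nhds 0) := by
  classical
  rcases Nat.eq_zero_or_pos N with hN0 | hN
  · subst hN0
    have hx0 : x = fun _ => 0 := funext fun u => funext fun j => absurd j.isLt (by omega)
    rw [hx0]
    exact tendsto_const_nhds
  have hM : 0 < M := (s 0).pos
  haveI : Nonempty (Fin M) := ⟨s 0⟩
  set B : Fin M → Matrix (Fin N) (Fin N) ℂ := fun i => (A i).map Complex.ofReal with hBdef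
  have hρlog : ∀ i, Real.log (ρ i) < 0 := fun i => Real.log_neg (hρpos i) (hSchur i)
  have hVdet : ∀ i, IsUnit (V i).det := fun i => (Matrix.isUnit_iff_isUnit_det _).mp (hVunit i)
  have hVVinv : ∀ i, V i * (V i)⁻¹ = 1 := fun i => Matrix.mul_nonsing_inv _ (hVdet i)
  have hVinvV : ∀ i, (V i)⁻¹ * V i = 1 := fun i => Matrix.nonsing_inv_mul _ (hVdet i)
  have hDentry : ∀ i (j : Fin N), ‖D i j j‖ ≤ ρ i := by
    intro i j
    rw [hρ i]
    exact my_diag_entry_le hN (A i) (V i) (D i) (hVunit i) (hDdiag i) (hdecomp i) j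
  have hDpow : ∀ i (n : ℕ), ‖D i ^ n‖ ≤ ρ i ^ n := by
    intro i n
    have hdg : Matrix.diagonal (Matrix.diag (D i)) = D i := (hDdiag i).diagonal_diag
    rw [← hdg, Matrix.diagonal_pow]
    apply my_diag_norm_le
    · exact pow_nonneg (hρpos i).le n
    · intro j
      calc ‖(Matrix.diag (D i) ^ n) j‖ = ‖D i j j ^ n‖ := rfl
        _ = ‖D i j j‖ ^ n := norm_pow _ _
        _ ≤ ρ i ^ n := pow_le_pow_left₀ (norm_nonneg _) (hDentry i j) n
  have hBpow : ∀ i (n : ℕ), B i ^ n = V i * D i ^ n * (V i)⁻¹ := by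
    intro i n
    induction n with
    | zero =>
      rw [pow_zero, pow_zero, Matrix.mul_one, hVVinv i]
    | succ n ihn =>
      have hBi : B i = V i * D i * (V i)⁻¹ := hdecomp i
      rw [pow_succ, ihn, hBi]
      simp only [Matrix.mul_assoc]
      rw [Matrix.nonsing_inv_mul_cancel_left _ _ (hVdet i)]
      simp only [pow_succ, Matrix.mul_assoc]
  set y : ℕ → (Fin N → ℂ) := fun u => fun j => ((x u j : ℝ) : ℂ) with hydef
  have hy : ∀ u, y (u+1) = (B (σ u)) *ᵥ y u := by
    intro u
    have h : y (u+1) = fun j => (((A (σ u)) *ᵥ (x u)) j : ℂ) := by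
      funext j
      show ((x (u+1) j : ℝ) : ℂ) = _
      rw [hx u]
    rw [h, my_lift_mulVec]
  have hstep : ∀ k m, t k + m ≤ t (k+1) → y (t k + m) = (B (s (k+1)) ^ m) *ᵥ y (t k) := by
    intro k m
    induction m with
    | zero => intro _; rw [Nat.add_zero, pow_zero, Matrix.one_mulVec]
    | succ m ihm =>
      intro hle
      have hle' : t k + m ≤ t (k+1) := by omega
      have hlt : t k + m < t (k+1) := by omega
      have hσ' : σ (t k + m) = s (k+1) := hσ k (t k + m) (by omega) hlt
      have e : t k + (m+1) = (t k + m) + 1 := by omega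
      rw [e, hy (t k + m), hσ', ihm hle', Matrix.mulVec_mulVec, ← pow_succ']
  set L : ℕ → ℕ := fun k => t (k+1) - t k with hLdef
  have hLτ : ∀ k, τ ≤ (L k : ℝ) := hdwell
  have htL : ∀ k, t k + L k = t (k+1) := by
    intro k
    have h1 : t k < t (k + 1) := htmono (Nat.lt_succ_self k)
    have h2 : L k = t (k+1) - t k := rfl
    omega
  have hyk : ∀ k, y (t (k+1)) = (B (s (k+1)) ^ L k) *ᵥ y (t k) := by
    intro k
    have := hstep k (L k) (by rw [htL k])
    rwa [htL k] at this
  set z : ℕ → (Fin N → ℂ) := fun k => (V (s (k+1)))⁻¹ *ᵥ y (t k) with hzdef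
  have hyz : ∀ k, y (t k) = V (s (k+1)) *ᵥ z k := by
    intro k
    rw [hzdef]
    simp only
    rw [Matrix.mulVec_mulVec, hVVinv, Matrix.one_mulVec]
  set f : Fin M → Fin M → ℝ :=
    fun i j' => Real.log ‖(V j')⁻¹ * V i‖ + τ * Real.log (ρ i) with hfdef
  have hzstep : ∀ k, en (z (k+1)) ≤ Real.exp (f (s (k+1)) (s (k+1+1))) * en (z k) := by
    intro k
    have e1 : z (k+1) = (((V (s (k+1+1)))⁻¹ * V (s (k+1))) * D (s (k+1)) ^ L k) *ᵥ z k := by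
      show (V (s (k+1+1)))⁻¹ *ᵥ y (t (k+1)) = _
      rw [hyk k, hyz k, Matrix.mulVec_mulVec, Matrix.mulVec_mulVec, hBpow]
      congr 1
      simp only [Matrix.mul_assoc]
      rw [hVinvV (s (k+1)), Matrix.mul_one]
    rw [e1]
    calc en ((((V (s (k+1+1)))⁻¹ * V (s (k+1))) * D (s (k+1)) ^ L k) *ᵥ z k)
        ≤ ‖((V (s (k+1+1)))⁻¹ * V (s (k+1))) * D (s (k+1)) ^ L k‖ * en (z k) :=
          en_mulVec_le _ _
      _ ≤ (‖(V (s (k+1+1)))⁻¹ * V (s (k+1))‖ * ‖D (s (k+1)) ^ L k‖) * en (z k) :=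
          mul_le_mul_of_nonneg_right (norm_mul_le _ _) (en_nonneg _)
      _ ≤ Real.exp (f (s (k+1)) (s (k+1+1))) * en (z k) := by
          apply mul_le_mul_of_nonneg_right _ (en_nonneg _)
          rw [hfdef]
          simp only
          rw [Real.exp_add]
          apply mul_le_mul _ _ (norm_nonneg _) (Real.exp_nonneg _)
          · rcases eq_or_lt_of_le (norm_nonneg ((V (s (k+1+1)))⁻¹ * V (s (k+1)))) with h | h
            · rw [← h]; positivity
            · rw [Real.exp_log h]
          · calc ‖D (s (k+1)) ^ L k‖ ≤ ρ (s (k+1)) ^ L k := hDpow _ _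
              _ = Real.exp ((L k : ℝ) * Real.log (ρ (s (k+1)))) := by
                  rw [Real.exp_nat_mul, Real.exp_log (hρpos _)]
              _ ≤ Real.exp (τ * Real.log (ρ (s (k+1)))) := by
                  apply Real.exp_le_exp.mpr
                  have h1 := hLτ k
                  have h2 := hρlog (s (k+1))
                  nlinarith
  have hziter : ∀ k, en (z k)
      ≤ en (z 0) * Real.exp (∑ j ∈ Finset.range k, f (s (j+1)) (s (j+1+1))) := by
    intro k
    induction k with
    | zero => simp
    | succ k ihk =>
      calc en (z (k+1)) ≤ Real.exp (f (s (k+1)) (s (k+1+1))) * en (z k) := hzstep k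
        _ ≤ Real.exp (f (s (k+1)) (s (k+1+1)))
            * (en (z 0) * Real.exp (∑ j ∈ Finset.range k, f (s (j+1)) (s (j+1+1)))) :=
          mul_le_mul_of_nonneg_left ihk (Real.exp_nonneg _)
        _ = en (z 0) * Real.exp (∑ j ∈ Finset.range (k+1), f (s (j+1)) (s (j+1+1))) := by
          rw [Finset.sum_range_succ,
            Real.exp_add (∑ j ∈ Finset.range k, f (s (j+1)) (s (j+1+1)))
              (f (s (k+1)) (s (k+1+1)))]
          ring
  set mρ : ℝ := Finset.univ.inf' Finset.univ_nonempty (fun i => -Real.log (ρ i)) with hmρ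
  have hmρpos : 0 < mρ := by
    rw [hmρ, Finset.lt_inf'_iff]
    intro i _
    linarith [hρlog i]
  have hmρle : ∀ i, mρ ≤ -Real.log (ρ i) := fun i => Finset.inf'_le _ (Finset.mem_univ i)
  set δ : ℝ := (τ - ν) * mρ with hδdef
  have hδpos : 0 < δ := mul_pos (by linarith) hmρpos
  have hcyc : ∀ C, IsCycleList E C → cycleWeight f C ≤ -δ := by
    intro C hC
    have hlpos : 0 < C.length := List.length_pos_iff.mpr hC.1
    have hlen : (C.zip (C.rotate 1)).length = C.length := by
      rw [List.length_zip, List.length_rotate, Nat.min_self]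
    have hWm_ge : mρ ≤ cycleWeight (fun i _ => -Real.log (ρ i)) C := by
      rw [cycleWeight]
      have hterms : ∀ r ∈ ((C.zip (C.rotate 1)).map fun p => -Real.log (ρ p.1)), mρ ≤ r := by
        intro r hr
        obtain ⟨p, _, rfl⟩ := List.mem_map.mp hr
        exact hmρle _
      have h1 := List.card_nsmul_le_sum _ mρ hterms
      rw [List.length_map, hlen] at h1
      have h2 : mρ ≤ C.length • mρ := by
        rw [nsmul_eq_mul]
        nlinarith [hmρpos, (Nat.one_le_cast (α := ℝ)).mpr hlpos]
      exact h2.trans h1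
    have hWmpos : 0 < cycleWeight (fun i _ => -Real.log (ρ i)) C := lt_of_lt_of_le hmρpos hWm_ge
    have hratio : cycleWeight (fun i j => Real.log ‖(V j)⁻¹ * V i‖) C /
        cycleWeight (fun i _ => -Real.log (ρ i)) C ≤ ν := hν.2 ⟨C, hC, rfl⟩
    have hWp_le : cycleWeight (fun i j => Real.log ‖(V j)⁻¹ * V i‖) C
        ≤ ν * cycleWeight (fun i _ => -Real.log (ρ i)) C := by
      have := (div_le_iff₀ hWmpos).mp hratio
      linarith
    have hsplitW : cycleWeight f C = cycleWeight (fun i j => Real.log ‖(V j)⁻¹ * V i‖) C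
        + (-τ) * cycleWeight (fun i _ => -Real.log (ρ i)) C := by
      rw [cycleWeight, cycleWeight, cycleWeight]
      have hfe : (fun p : Fin M × Fin M => f p.1 p.2)
          = fun p => (fun p : Fin M × Fin M => Real.log ‖(V p.2)⁻¹ * V p.1‖) p
            + (-τ) * (fun p : Fin M × Fin M => -Real.log (ρ p.1)) p := by
        funext p
        rw [hfdef]
        ring
      rw [hfe, my_sum_split]
    rw [hsplitW, hδdef]
    nlinarith [hWm_ge, hWmpos]
  set K : ℝ := ∑ i, ∑ j, |f i j| with hK
  have hK0 : 0 ≤ K := Finset.sum_nonneg (fun i _ => Finset.sum_nonneg (fun j _ => abs_nonneg _))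
  have hKle : ∀ i j, f i j ≤ K := by
    intro i j
    calc f i j ≤ |f i j| := le_abs_self _
      _ ≤ ∑ j', |f i j'| :=
        Finset.single_le_sum (f := fun j' => |f i j'|)
          (fun _ _ => abs_nonneg _) (Finset.mem_univ j)
      _ ≤ K := by
        rw [hK]
        exact Finset.single_le_sum (f := fun i' => ∑ j', |f i' j'|)
          (fun _ _ => Finset.sum_nonneg fun _ _ => abs_nonneg _) (Finset.mem_univ i)
  have hwalk := my_walk_bound E f K δ hK0 hKle hδpos.le hcyc
  have hzbound : ∀ k, en (z k) ≤ en (z 0) * Real.exp (M * K - δ * ((k / M : ℕ) : ℝ)) := by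
    intro k
    have h1 := hziter k
    have h2 := hwalk k (fun j => s (j+1)) (fun j => hrespect j)
    calc en (z k) ≤ en (z 0) * Real.exp (∑ j ∈ Finset.range k, f (s (j+1)) (s (j+1+1))) := h1
      _ ≤ en (z 0) * Real.exp (M * K - δ * ((k / M : ℕ) : ℝ)) :=
        mul_le_mul_of_nonneg_left (Real.exp_le_exp.mpr h2) (en_nonneg _)
  set kk : ℕ → ℕ := fun u => Nat.findGreatest (fun k => t k ≤ u) u with hkkdef
  have htk_ge : ∀ k, k ≤ t k := fun k => htmono.le_apply
  have hkk1 : ∀ u, t (kk u) ≤ u := by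
    intro u
    show t (Nat.findGreatest (fun k => t k ≤ u) u) ≤ u
    exact Nat.findGreatest_spec (P := fun k => t k ≤ u) (m := 0) (Nat.zero_le u)
      (by show t 0 ≤ u; rw [ht0]; exact Nat.zero_le u)
  have hkk2 : ∀ u, u < t (kk u + 1) := by
    intro u
    by_contra h
    push_neg at h
    have h2 : kk u + 1 ≤ u := le_trans (htk_ge _) h
    have h3 : kk u + 1 ≤ kk u := Nat.le_findGreatest h2 h
    omega
  have hkk3 : ∀ K0 u, t K0 ≤ u → K0 ≤ kk u := by
    intro K0 u hu
    show K0 ≤ Nat.findGreatest (fun k => t k ≤ u) u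
    exact Nat.le_findGreatest (le_trans (htk_ge K0) hu) hu
  set Cv : ℝ := ∑ i, ‖V i‖ with hCv
  have hCvle : ∀ i, ‖V i‖ ≤ Cv :=
    fun i => Finset.single_le_sum (fun _ _ => norm_nonneg _) (Finset.mem_univ i)
  have hCv0 : 0 ≤ Cv := Finset.sum_nonneg fun _ _ => norm_nonneg _
  have hyu : ∀ u, en (y u) ≤ Cv * en (z (kk u)) := by
    intro u
    set k := kk u with hkdef
    have h1 : y u = (B (s (k+1)) ^ (u - t k)) *ᵥ y (t k) := by
      have hk1 : t k ≤ u := by rw [hkdef]; exact hkk1 u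
      have hk2 : u < t (k + 1) := by rw [hkdef]; exact hkk2 u
      have h := hstep k (u - t k) (by omega)
      rwa [Nat.add_sub_cancel' hk1] at h
    have e : (V (s (k+1)) * D (s (k+1)) ^ (u - t k) * (V (s (k+1)))⁻¹) * V (s (k+1))
        = V (s (k+1)) * D (s (k+1)) ^ (u - t k) := by
      rw [Matrix.mul_assoc, hVinvV, Matrix.mul_one]
    rw [h1, hyz k, Matrix.mulVec_mulVec, hBpow, e]
    calc en ((V (s (k+1)) * D (s (k+1)) ^ (u - t k)) *ᵥ z k)
        ≤ ‖V (s (k+1)) * D (s (k+1)) ^ (u - t k)‖ * en (z k) := en_mulVec_le _ _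
      _ ≤ (‖V (s (k+1))‖ * ‖D (s (k+1)) ^ (u - t k)‖) * en (z k) :=
          mul_le_mul_of_nonneg_right (norm_mul_le _ _) (en_nonneg _)
      _ ≤ Cv * en (z k) := by
          apply mul_le_mul_of_nonneg_right _ (en_nonneg _)
          have hd : ‖D (s (k+1)) ^ (u - t k)‖ ≤ 1 := by
            calc ‖D (s (k+1)) ^ (u - t k)‖ ≤ ρ (s (k+1)) ^ (u - t k) := hDpow _ _
              _ ≤ 1 := pow_le_one₀ (hρpos _).le (hSchur _).le
          calc ‖V (s (k+1))‖ * ‖D (s (k+1)) ^ (u - t k)‖ ≤ ‖V (s (k+1))‖ * 1 :=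
                mul_le_mul_of_nonneg_left hd (norm_nonneg _)
            _ = ‖V (s (k+1))‖ := mul_one _
            _ ≤ Cv := hCvle _
  rw [tendsto_pi_nhds]
  intro j0
  have hzero : (0 : Fin N → ℝ) j0 = 0 := rfl
  rw [hzero]
  apply squeeze_zero_norm
    (a := fun u => Cv * (en (z 0) * Real.exp (M * K - δ * (((kk u) / M : ℕ) : ℝ))))
  · intro u
    have hxy : ‖x u j0‖ = ‖y u j0‖ := by
      rw [hydef]
      simp [Complex.norm_real]
    calc ‖x u j0‖ = ‖y u j0‖ := hxy
      _ ≤ en (y u) := en_coord_le _ _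
      _ ≤ Cv * en (z (kk u)) := hyu u
      _ ≤ Cv * (en (z 0) * Real.exp (M * K - δ * (((kk u) / M : ℕ) : ℝ))) :=
        mul_le_mul_of_nonneg_left (hzbound (kk u)) hCv0
  · have hkkTop : Filter.Tendsto kk Filter.atTop Filter.atTop := by
      apply Filter.tendsto_atTop_atTop.mpr
      intro b
      exact ⟨t b, fun a ha => hkk3 b a ha⟩
    have hdivTop : Filter.Tendsto (fun k : ℕ => k / M) Filter.atTop Filter.atTop := by
      apply Filter.tendsto_atTop_atTop.mpr
      intro b
      exact ⟨b * M, fun a ha => (Nat.le_div_iff_mul_le hM).mpr ha⟩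
    have hcastTop : Filter.Tendsto (fun k : ℕ => (k : ℝ)) Filter.atTop Filter.atTop :=
      tendsto_natCast_atTop_atTop
    have hexp : Filter.Tendsto (fun r : ℝ => Cv * (en (z 0) * Real.exp (M * K - δ * r)))
        Filter.atTop (nhds 0) := by
      have h1 : Filter.Tendsto (fun r : ℝ => M * K - δ * r) Filter.atTop Filter.atBot := by
        have h0 : Filter.Tendsto (fun r : ℝ => δ * r) Filter.atTop Filter.atTop :=
          Filter.Tendsto.const_mul_atTop hδpos Filter.tendsto_id
        have hneg := Filter.tendsto_neg_atTop_atBot.comp h0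
        have := Filter.tendsto_atBot_add_const_left Filter.atTop ((M : ℝ) * K) hneg
        simpa [sub_eq_add_neg, Function.comp_def] using this
      have h2 := Real.tendsto_exp_atBot.comp h1
      have h3 : Filter.Tendsto (fun r : ℝ => Cv * (en (z 0) * Real.exp (M * K - δ * r)))
          Filter.atTop (nhds (Cv * (en (z 0) * 0))) := by
        apply Filter.Tendsto.const_mul
        apply Filter.Tendsto.const_mul
        simpa [Function.comp_def] using h2
      simpa using h3
    have := hexp.comp (hcastTop.comp (hdivTop.comp hkkTop))
    simpa [Function.comp_def] using this
end

section
/- Let $A_1, A_2 \in \mathbb{R}^{N\times N}$ be Schur stable, diagonalizable, and simultaneously triangularizable (there exists an invertible $T$ with $T^{-1}A_1T$ and $T^{-1}A_2T$ both upper triangular, and the eigenvector matrices $V_1, V_2$ can be chosen upper triangular). Then $\rho(|V_2^{-1}V_1| \, |V_1^{-1}V_2|) = 1$, and consequently the dwell-time bound $\frac{\ln \rho(|V_2^{-1}V_1||V_1^{-1}V_2|)}{-\ln(\rho_1\rho_2)}$ equals $0$, i.e., the bimodal switched system is stable under arbitrary switching (any positive dwell time suffices). -/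
/-- The entrywise absolute value of a complex matrix, viewed again as a complex matrix. -/
noncomputable def absMatrix {n : Type*} (A : Matrix n n ℂ) : Matrix n n ℂ :=
  Matrix.of fun i j => (‖A i j‖ : ℂ)

open Matrix Finset Filter

lemma diag_mul_tri {N : ℕ} {R : Type*} [CommRing R] {B C : Matrix (Fin N) (Fin N) R}
    (hB : B.BlockTriangular id) (hC : C.BlockTriangular id) (j : Fin N) :
    (B * C) j j = B j j * C j j := by
  rw [Matrix.mul_apply]
  apply Finset.sum_eq_single
  · intro k _ hk
    rcases lt_or_gt_of_ne hk with h | h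
    · rw [hB (show (id k : Fin N) < id j from h), zero_mul]
    · rw [hC (show (id j : Fin N) < id k from h), mul_zero]
  · simp

lemma spectralRadius_triangular_one {N : ℕ} (hN : 0 < N) {M : Matrix (Fin N) (Fin N) ℂ}
    (htri : M.BlockTriangular id) (hdiag : ∀ j, M j j = 1) :
    spectralRadius ℂ M = 1 := by
  have hspec : spectrum ℂ M = {1} := by
    ext z
    rw [spectrum.mem_iff, Matrix.isUnit_iff_isUnit_det]
    have htri' : (algebraMap ℂ (Matrix (Fin N) (Fin N) ℂ) z - M).BlockTriangular id := by
      rw [Matrix.algebraMap_eq_diagonal]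
      exact (Matrix.blockTriangular_diagonal _).sub htri
    rw [Matrix.det_of_upperTriangular htri']
    have : ∀ j : Fin N, (algebraMap ℂ (Matrix (Fin N) (Fin N) ℂ) z - M) j j = z - 1 := by
      intro j
      simp [Matrix.algebraMap_eq_diagonal, hdiag j, Pi.algebraMap_apply, Algebra.algebraMap_self_apply]
    rw [Finset.prod_congr rfl (fun j _ => this j), Finset.prod_const]
    simp only [isUnit_iff_ne_zero, Finset.card_univ, Fintype.card_fin, ne_eq, not_not,
      pow_eq_zero_iff hN.ne', sub_eq_zero]
    exact Set.mem_singleton_iff.symm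
  rw [spectralRadius, hspec]
  simp

lemma decay_aux {ρ : ℝ} (hρ0 : 0 ≤ ρ) (hρ1 : ρ < 1) (y ε : ℕ → ℝ)
    (hε : Tendsto ε atTop (nhds 0))
    (h : ∀ t, |y (t + 1)| ≤ ρ * |y t| + ε t) :
    Tendsto y atTop (nhds 0) := by
  rw [Metric.tendsto_atTop] at hε ⊢
  intro δ hδ
  have hc : 0 < (1 - ρ) * (δ / 2) := by nlinarith
  obtain ⟨T, hT⟩ := hε _ hc
  have key : ∀ s : ℕ, |y (T + s)| ≤ ρ ^ s * |y T| + δ / 2 := by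
    intro s
    induction s with
    | zero => simp; nlinarith [abs_nonneg (y T)]
    | succ s ih =>
      have h1 : ε (T + s) ≤ (1 - ρ) * (δ / 2) := by
        have := hT (T + s) (Nat.le_add_right _ _)
        rw [Real.dist_eq, sub_zero] at this
        exact (le_abs_self _).trans this.le
      have h3 : ρ * |y (T + s)| ≤ ρ * (ρ ^ s * |y T| + δ / 2) :=
        mul_le_mul_of_nonneg_left ih hρ0
      calc |y (T + (s + 1))| = |y (T + s + 1)| := by ring_nf
      _ ≤ ρ * |y (T + s)| + ε (T + s) := h (T + s)
      _ ≤ ρ * (ρ ^ s * |y T| + δ / 2) + (1 - ρ) * (δ / 2) := add_le_add h3 h1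
      _ = ρ ^ (s + 1) * |y T| + δ / 2 := by ring
  have hpow : Tendsto (fun s : ℕ => ρ ^ s * |y T|) atTop (nhds 0) := by
    simpa using (tendsto_pow_atTop_nhds_zero_of_lt_one hρ0 hρ1).mul_const (|y T|)
  rw [Metric.tendsto_atTop] at hpow
  obtain ⟨s₀, hs₀⟩ := hpow (δ / 2) (by linarith)
  refine ⟨T + s₀, fun t ht => ?_⟩
  rw [Real.dist_eq, sub_zero]
  have h1 : t = T + (t - T) := by omega
  have h3 := key (t - T)
  have h4 := hs₀ (t - T) (by omega)
  rw [Real.dist_eq, sub_zero] at h4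
  have h5 : ρ ^ (t - T) * |y T| < δ / 2 := (le_abs_self _).trans_lt h4
  rw [h1]
  linarith


/-- For a bimodal switched system with Schur stable, diagonalizable, simultaneously
triangularizable subsystem matrices (upper triangular eigenvector matrices `V₁, V₂`),
one has `ρ(|V₂⁻¹V₁| |V₁⁻¹V₂|) = 1`, the corresponding dwell-time bound
`ln ρ(|V₂⁻¹V₁||V₁⁻¹V₂|) / (-ln (ρ₁ρ₂))` equals `0`, and the switched system is
asymptotically stable under arbitrary switching. -/
theorem bimodal_simultaneously_triangularizable_stable
    {N : ℕ} (hN : 0 < N)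
    (A : Fin 2 → Matrix (Fin N) (Fin N) ℝ)
    (V D : Fin 2 → Matrix (Fin N) (Fin N) ℂ) (ρ : Fin 2 → ℝ)
    (hVunit : ∀ i, IsUnit (V i))
    (hVtri : ∀ i, (V i).BlockTriangular id)
    (hDdiag : ∀ i, (D i).IsDiag)
    (hdecomp : ∀ i, (A i).map Complex.ofReal = V i * D i * (V i)⁻¹)
    (hρ0 : ∀ i, 0 < ρ i) (hρ1 : ∀ i, ρ i < 1)
    (hD : ∀ i j, ‖D i j j‖ ≤ ρ i) :
    spectralRadius ℂ (absMatrix ((V 1)⁻¹ * V 0) * absMatrix ((V 0)⁻¹ * V 1)) = 1 ∧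
    Real.log (spectralRadius ℂ
        (absMatrix ((V 1)⁻¹ * V 0) * absMatrix ((V 0)⁻¹ * V 1))).toReal /
      (-Real.log (ρ 0 * ρ 1)) = 0 ∧
    ∀ (σ : ℕ → Fin 2) (x : ℕ → Fin N → ℝ),
      (∀ t, x (t + 1) = (A (σ t)).mulVec (x t)) →
      Filter.Tendsto x Filter.atTop (nhds 0) := by
  -- basic facts about V
  have hVdet : ∀ i, IsUnit (V i).det := fun i => (Matrix.isUnit_iff_isUnit_det _).mp (hVunit i)
  have hVinv_tri : ∀ i, ((V i)⁻¹).BlockTriangular id := by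
    intro i
    haveI := (hVunit i).invertible
    exact Matrix.blockTriangular_inv_of_blockTriangular (hVtri i)
  have hVdiag : ∀ i j, V i j j * (V i)⁻¹ j j = 1 := by
    intro i j
    have h := diag_mul_tri (hVtri i) (hVinv_tri i) j
    rw [Matrix.mul_nonsing_inv _ (hVdet i)] at h
    simpa using h.symm
  -- the matrix S = V₂⁻¹ V₁ and its inverse
  set S : Matrix (Fin N) (Fin N) ℂ := (V 1)⁻¹ * V 0 with hSdef
  have hSdet : IsUnit S.det := by
    rw [Matrix.det_mul]
    exact (Matrix.isUnit_nonsing_inv_det _ (hVdet 1)).mul (hVdet 0)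
  have hStri : S.BlockTriangular id := (hVinv_tri 1).mul (hVtri 0)
  have hSinv : S⁻¹ = (V 0)⁻¹ * V 1 := by
    rw [hSdef, Matrix.mul_inv_rev, Matrix.nonsing_inv_nonsing_inv _ (hVdet 1)]
  have hSinv_tri : S⁻¹.BlockTriangular id := by
    rw [hSinv]; exact (hVinv_tri 0).mul (hVtri 1)
  have hSdiag : ∀ j, S j j * S⁻¹ j j = 1 := by
    intro j
    have h := diag_mul_tri hStri hSinv_tri j
    rw [Matrix.mul_nonsing_inv _ hSdet] at h
    simpa using h.symm
  -- triangularity of absMatrix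
  have habs_tri : ∀ (M : Matrix (Fin N) (Fin N) ℂ), M.BlockTriangular id →
      (absMatrix M).BlockTriangular id := by
    intro M hM i k hik
    simp [absMatrix, hM hik]
  have hMtri : (absMatrix S * absMatrix S⁻¹).BlockTriangular id :=
    (habs_tri _ hStri).mul (habs_tri _ hSinv_tri)
  have hMdiag : ∀ j, (absMatrix S * absMatrix S⁻¹) j j = 1 := by
    intro j
    rw [diag_mul_tri (habs_tri _ hStri) (habs_tri _ hSinv_tri) j]
    simp only [absMatrix, Matrix.of_apply]
    rw [← Complex.ofReal_mul, ← norm_mul, hSdiag j]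
    simp
  have hsr : spectralRadius ℂ (absMatrix S * absMatrix S⁻¹) = 1 :=
    spectralRadius_triangular_one hN hMtri hMdiag
  rw [hSinv] at hsr
  refine ⟨hsr, by rw [hsr]; simp, ?_⟩
  -- stability part
  -- the A i are upper triangular with diagonal bounded by ρ i
  have hDtri : ∀ i, (D i).BlockTriangular id := fun i a b hab => (hDdiag i) hab.ne'
  have hA_tri : ∀ i, ∀ j k : Fin N, k < j → A i j k = 0 := by
    intro i j k hk
    have htri : ((A i).map Complex.ofReal).BlockTriangular id := by
      rw [hdecomp i]
      exact ((hVtri i).mul (hDtri i)).mul (hVinv_tri i)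
    have := htri (show (id k : Fin N) < id j from hk)
    rwa [Matrix.map_apply, Complex.ofReal_eq_zero] at this
  have hA_diag : ∀ i (j : Fin N), |A i j j| ≤ ρ i := by
    intro i j
    have h1 : ((A i).map Complex.ofReal) j j = D i j j := by
      rw [hdecomp i, diag_mul_tri ((hVtri i).mul (hDtri i)) (hVinv_tri i) j,
        diag_mul_tri (hVtri i) (hDtri i) j]
      rw [mul_comm (V i j j) (D i j j), mul_assoc, hVdiag i j, mul_one]
    rw [Matrix.map_apply] at h1
    have h2 : |A i j j| = ‖((A i j j : ℝ) : ℂ)‖ := by simp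
    rw [h2, h1]
    exact hD i j
  intro σ x hx
  rw [tendsto_pi_nhds]
  set ρm : ℝ := max (ρ 0) (ρ 1) with hρmdef
  have hρm0 : 0 ≤ ρm := le_trans (hρ0 0).le (le_max_left _ _)
  have hρm1 : ρm < 1 := max_lt (hρ1 0) (hρ1 1)
  have hρi : ∀ i : Fin 2, ρ i ≤ ρm := by
    intro i
    fin_cases i
    · exact le_max_left _ _
    · exact le_max_right _ _
  have main : ∀ d : ℕ, ∀ j : Fin N, N - j.val ≤ d →
      Tendsto (fun t => x t j) atTop (nhds 0) := by
    intro d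
    induction d with
    | zero => intro j hj; exact absurd hj (by have := j.isLt; omega)
    | succ d ih =>
      intro j hj
      set C : Fin N → ℝ := fun k => max |A 0 j k| |A 1 j k| with hCdef
      have hε : Tendsto (fun t => ∑ k ∈ Finset.univ.filter (fun k => j < k), C k * |x t k|)
          atTop (nhds 0) := by
        have h0 : (0 : ℝ) = ∑ k ∈ Finset.univ.filter (fun k => j < k), (0 : ℝ) := by simp
        rw [h0]
        apply tendsto_finset_sum
        intro k hk
        have hk' : j < k := (Finset.mem_filter.mp hk).2
        have hd : N - k.val ≤ d := by
          have h1 := k.isLt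
          have h2 : j.val < k.val := hk'
          omega
        simpa using ((ih k hd).abs.const_mul (C k))
      apply decay_aux hρm0 hρm1 (fun t => x t j) _ hε
      intro t
      have hxt : x (t + 1) j = A (σ t) j j * x t j +
          ∑ k ∈ Finset.univ.filter (fun k => j < k), A (σ t) j k * x t k := by
        rw [hx t]
        show ∑ k, A (σ t) j k * x t k = _
        rw [← Finset.sum_erase_add Finset.univ _ (Finset.mem_univ j), add_comm]
        congr 1
        symm
        apply Finset.sum_subset
        · intro k hk
          rw [Finset.mem_filter] at hk
          exact Finset.mem_erase.mpr ⟨hk.2.ne', Finset.mem_univ k⟩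
        · intro k hk hknot
          have hk1 : k ≠ j := (Finset.mem_erase.mp hk).1
          have hk2 : ¬ j < k := by
            intro h
            exact hknot (Finset.mem_filter.mpr ⟨Finset.mem_univ k, h⟩)
          have : k < j := lt_of_le_of_ne (not_lt.mp hk2) hk1
          rw [hA_tri (σ t) j k this, zero_mul]
      show |x (t + 1) j| ≤ ρm * |x t j| + _
      rw [hxt]
      have hAjj : |A (σ t) j j| ≤ ρm := (hA_diag (σ t) j).trans (hρi (σ t))
      have hAjk : ∀ k, |A (σ t) j k| ≤ C k := by
        intro k
        have h2 : ∀ i : Fin 2, i = 0 ∨ i = 1 := by decide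
        rcases h2 (σ t) with h | h <;> rw [h]
        · exact le_max_left _ _
        · exact le_max_right _ _
      calc |A (σ t) j j * x t j + ∑ k ∈ Finset.univ.filter (fun k => j < k),
              A (σ t) j k * x t k|
          ≤ |A (σ t) j j * x t j| + |∑ k ∈ Finset.univ.filter (fun k => j < k),
              A (σ t) j k * x t k| := abs_add_le _ _
        _ ≤ ρm * |x t j| + ∑ k ∈ Finset.univ.filter (fun k => j < k), C k * |x t k| := by
            apply add_le_add
            · rw [abs_mul]
              exact mul_le_mul_of_nonneg_right hAjj (abs_nonneg _)
            · refine (Finset.abs_sum_le_sum_abs _ _).trans (Finset.sum_le_sum ?_)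
              intro k _
              rw [abs_mul]
              exact mul_le_mul_of_nonneg_right (hAjk k) (abs_nonneg _)
  intro j
  simpa using main N j (by omega)
end

section
/- For any invertible matrix $A \in \mathbb{C}^{N\times N}$ and any induced $p$-norm ($p = 1$ or $p = \infty$), and for any invertible diagonal matrices $D_L, D_R$, the scaled condition number satisfies $\kappa_p(D_L A D_R) \ge \rho(|A| \, |A^{-1}|)$, where $\kappa_p(B) = \|B\|_p \|B^{-1}\|_p$ and $|A|$ is the entrywise absolute value. -/
/-- The induced `∞`-norm of a matrix: the maximum absolute row sum. -/
noncomputable def rowSumNorm {N : ℕ} (A : Matrix (Fin N) (Fin N) ℂ) : ℝ :=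
  ⨆ i, ∑ j, ‖A i j‖

/-- The induced `1`-norm of a matrix: the maximum absolute column sum. -/
noncomputable def colSumNorm {N : ℕ} (A : Matrix (Fin N) (Fin N) ℂ) : ℝ :=
  ⨆ j, ∑ i, ‖A i j‖

section Aux

open Matrix

attribute [local instance] Matrix.linftyOpNormedAddCommGroup Matrix.linftyOpNormedRing
  Matrix.linftyOpNormedAlgebra

lemma absMatrix_apply {n : Type*} (A : Matrix n n ℂ) (i j : n) :
    absMatrix A i j = (‖A i j‖ : ℂ) := rfl

lemma rowSumNorm_eq_norm {N : ℕ} (hN : N ≠ 0) (A : Matrix (Fin N) (Fin N) ℂ) :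
    rowSumNorm A = ‖A‖ := by
  haveI : Nonempty (Fin N) := ⟨⟨0, Nat.pos_of_ne_zero hN⟩⟩
  rw [Matrix.linfty_opNorm_def,
    ← Finset.sup'_eq_sup Finset.univ_nonempty (fun i : Fin N => ∑ j, ‖A i j‖₊),
    Finset.comp_sup'_eq_sup'_comp Finset.univ_nonempty ((↑) : NNReal → ℝ)
      (fun x y => by simp [NNReal.coe_max]),
    rowSumNorm, ← Finset.sup'_univ_eq_ciSup]
  apply Finset.sup'_congr _ rfl
  intro i _
  simp [Function.comp, NNReal.coe_sum]

lemma norm_absMatrix {N : ℕ} (A : Matrix (Fin N) (Fin N) ℂ) :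
    ‖absMatrix A‖ = ‖A‖ := by
  rw [Matrix.linfty_opNorm_def, Matrix.linfty_opNorm_def]
  congr 1
  apply Finset.sup_congr rfl
  intro i _
  apply Finset.sum_congr rfl
  intro j _
  ext
  simp [absMatrix_apply, Complex.norm_real,
    abs_of_nonneg (norm_nonneg _)]

lemma iSup_nnnorm_le_of_diff {s t : Set ℂ} (h : s \ {0} ⊆ t) :
    (⨆ k ∈ s, (‖k‖₊ : ENNReal)) ≤ ⨆ k ∈ t, (‖k‖₊ : ENNReal) := by
  refine iSup₂_le fun k hk => ?_
  rcases eq_or_ne k 0 with rfl | hk0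
  · simp
  · exact le_iSup₂ (f := fun k _ => (‖k‖₊ : ENNReal)) k (h ⟨hk, hk0⟩)

lemma spectralRadius_eq_of_diff {N : ℕ} {M M' : Matrix (Fin N) (Fin N) ℂ}
    (h : spectrum ℂ M \ {0} = spectrum ℂ M' \ {0}) :
    spectralRadius ℂ M = spectralRadius ℂ M' := by
  simp only [spectralRadius]
  exact le_antisymm
    (iSup_nnnorm_le_of_diff (h ▸ Set.diff_subset))
    (iSup_nnnorm_le_of_diff (h ▸ Set.diff_subset))

lemma spectrum_transpose {N : ℕ} (M : Matrix (Fin N) (Fin N) ℂ) :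
    spectrum ℂ Mᵀ = spectrum ℂ M := by
  ext k
  have ht : (algebraMap ℂ (Matrix (Fin N) (Fin N) ℂ) k - M)ᵀ
      = algebraMap ℂ (Matrix (Fin N) (Fin N) ℂ) k - Mᵀ := by
    rw [Matrix.transpose_sub, Algebra.algebraMap_eq_smul_one, Matrix.transpose_smul,
      Matrix.transpose_one]
  simp only [spectrum.mem_iff, ← ht, Matrix.isUnit_transpose]

/-- The key row-norm bound. -/
lemma row_bound {N : ℕ} (hN : N ≠ 0) (A : Matrix (Fin N) (Fin N) ℂ)
    (dL dR : Fin N → ℂ) (hdL : ∀ i, dL i ≠ 0) (hdR : ∀ i, dR i ≠ 0) :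
    (spectralRadius ℂ (absMatrix A * absMatrix A⁻¹)).toReal ≤
      rowSumNorm (Matrix.diagonal dL * A * Matrix.diagonal dR) *
        rowSumNorm (Matrix.diagonal dL * A * Matrix.diagonal dR)⁻¹ := by
  haveI : Nonempty (Fin N) := ⟨⟨0, Nat.pos_of_ne_zero hN⟩⟩
  set B := Matrix.diagonal dL * A * Matrix.diagonal dR with hB
  set eL : Fin N → ℂ := fun i => (‖dL i‖ : ℂ) with heL
  set eR : Fin N → ℂ := fun i => (‖dR i‖ : ℂ) with heR
  have heLne : ∀ i, eL i ≠ 0 := fun i =>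
    Complex.ofReal_ne_zero.mpr (norm_ne_zero_iff.mpr (hdL i))
  have heRne : ∀ i, eR i ≠ 0 := fun i =>
    Complex.ofReal_ne_zero.mpr (norm_ne_zero_iff.mpr (hdR i))
  have hdiag : ∀ (v : Fin N → ℂ), (∀ i, v i ≠ 0) →
      Matrix.diagonal v * Matrix.diagonal (fun i => (v i)⁻¹) = 1 := by
    intro v hv
    rw [Matrix.diagonal_mul_diagonal]
    have h1 : (fun i => v i * (v i)⁻¹) = fun _ => (1 : ℂ) :=
      funext fun i => mul_inv_cancel₀ (hv i)
    rw [h1, Matrix.diagonal_one]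
  have hdiag' : ∀ (v : Fin N → ℂ), (∀ i, v i ≠ 0) →
      Matrix.diagonal (fun i => (v i)⁻¹) * Matrix.diagonal v = 1 := by
    intro v hv
    rw [Matrix.diagonal_mul_diagonal]
    have h1 : (fun i => (v i)⁻¹ * v i) = fun _ => (1 : ℂ) :=
      funext fun i => inv_mul_cancel₀ (hv i)
    rw [h1, Matrix.diagonal_one]
  have hdinv : ∀ (v : Fin N → ℂ), (∀ i, v i ≠ 0) →
      (Matrix.diagonal v)⁻¹ = Matrix.diagonal (fun i => (v i)⁻¹) := fun v hv =>
    Matrix.inv_eq_right_inv (hdiag v hv)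
  -- entrywise identities
  have habsB : absMatrix B = Matrix.diagonal eL * absMatrix A * Matrix.diagonal eR := by
    ext i j
    simp only [hB, absMatrix_apply, Matrix.mul_diagonal, Matrix.diagonal_mul]
    simp only [heL, heR, norm_mul, Complex.ofReal_mul]
  have hBinv : B⁻¹ = Matrix.diagonal (fun i => (dR i)⁻¹) * A⁻¹
      * Matrix.diagonal (fun i => (dL i)⁻¹) := by
    rw [hB, Matrix.mul_inv_rev, Matrix.mul_inv_rev, hdinv dR hdR, hdinv dL hdL,
      ← mul_assoc]
  have habsBinv : absMatrix B⁻¹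
      = Matrix.diagonal (fun i => (eR i)⁻¹) * absMatrix A⁻¹
          * Matrix.diagonal (fun i => (eL i)⁻¹) := by
    ext i j
    simp only [hBinv, absMatrix_apply, Matrix.mul_diagonal, Matrix.diagonal_mul]
    simp only [heL, heR, norm_mul, norm_inv, Complex.ofReal_mul, Complex.ofReal_inv]
  -- conjugation identity
  have hconj : absMatrix B * absMatrix B⁻¹
      = Matrix.diagonal eL * (absMatrix A * absMatrix A⁻¹)
          * Matrix.diagonal (fun i => (eL i)⁻¹) := by
    rw [habsB, habsBinv]
    calc Matrix.diagonal eL * absMatrix A * Matrix.diagonal eR *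
          (Matrix.diagonal (fun i => (eR i)⁻¹) * absMatrix A⁻¹
            * Matrix.diagonal (fun i => (eL i)⁻¹))
        = Matrix.diagonal eL * absMatrix A *
            (Matrix.diagonal eR * Matrix.diagonal (fun i => (eR i)⁻¹)) *
            (absMatrix A⁻¹ * Matrix.diagonal (fun i => (eL i)⁻¹)) := by
          noncomm_ring
      _ = _ := by rw [hdiag eR heRne]; noncomm_ring
  -- spectra agree
  have hspec : spectrum ℂ (absMatrix A * absMatrix A⁻¹)
      = spectrum ℂ (absMatrix B * absMatrix B⁻¹) := by
    rw [hconj]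
    let u : (Matrix (Fin N) (Fin N) ℂ)ˣ :=
      ⟨Matrix.diagonal eL, Matrix.diagonal (fun i => (eL i)⁻¹),
        hdiag eL heLne, hdiag' eL heLne⟩
    exact (spectrum.units_conjugate (u := u)).symm
  have hrad : spectralRadius ℂ (absMatrix A * absMatrix A⁻¹)
      = spectralRadius ℂ (absMatrix B * absMatrix B⁻¹) := by
    simp only [spectralRadius, hspec]
  rw [hrad]
  have h1 : spectralRadius ℂ (absMatrix B * absMatrix B⁻¹)
      ≤ (‖absMatrix B * absMatrix B⁻¹‖₊ : ENNReal) :=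
    spectrum.spectralRadius_le_nnnorm (𝕜 := ℂ) _
  calc (spectralRadius ℂ (absMatrix B * absMatrix B⁻¹)).toReal
      ≤ ((‖absMatrix B * absMatrix B⁻¹‖₊ : ENNReal)).toReal :=
        ENNReal.toReal_mono ENNReal.coe_ne_top h1
    _ = ‖absMatrix B * absMatrix B⁻¹‖ := by simp
    _ ≤ ‖absMatrix B‖ * ‖absMatrix B⁻¹‖ := Matrix.linfty_opNorm_mul _ _
    _ = ‖B‖ * ‖B⁻¹‖ := by rw [norm_absMatrix, norm_absMatrix]
    _ = rowSumNorm B * rowSumNorm B⁻¹ := by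
        rw [rowSumNorm_eq_norm hN, rowSumNorm_eq_norm hN]

/-- One direction of Bauer's theorem: for any invertible matrix `A` and any invertible
diagonal scalings `D_L, D_R`, the `∞`-norm and `1`-norm condition numbers of `D_L A D_R`
are bounded below by `ρ(|A| |A⁻¹|)`. -/
theorem bauer_condition_number_lower_bound
    {N : ℕ} (A : Matrix (Fin N) (Fin N) ℂ) (hA : IsUnit A)
    (dL dR : Fin N → ℂ) (hdL : ∀ i, dL i ≠ 0) (hdR : ∀ i, dR i ≠ 0) :
    (spectralRadius ℂ (absMatrix A * absMatrix A⁻¹)).toReal ≤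
      rowSumNorm (Matrix.diagonal dL * A * Matrix.diagonal dR) *
        rowSumNorm (Matrix.diagonal dL * A * Matrix.diagonal dR)⁻¹ ∧
    (spectralRadius ℂ (absMatrix A * absMatrix A⁻¹)).toReal ≤
      colSumNorm (Matrix.diagonal dL * A * Matrix.diagonal dR) *
        colSumNorm (Matrix.diagonal dL * A * Matrix.diagonal dR)⁻¹ := by
  rcases eq_or_ne N 0 with rfl | hN
  · rw [spectrum.SpectralRadius.of_subsingleton]
    constructor <;>
      · simp only [ENNReal.toReal_zero, rowSumNorm, colSumNorm]
        rw [Real.iSup_of_isEmpty, Real.iSup_of_isEmpty]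
        simp
  constructor
  · exact row_bound hN A dL dR hdL hdR
  · -- apply the row bound to the transpose
    have h := row_bound hN Aᵀ dR dL hdR hdL
    set B := Matrix.diagonal dL * A * Matrix.diagonal dR with hB
    have hT : Matrix.diagonal dR * Aᵀ * Matrix.diagonal dL = Bᵀ := by
      rw [hB, Matrix.transpose_mul, Matrix.transpose_mul, Matrix.diagonal_transpose,
        Matrix.diagonal_transpose, mul_assoc]
    rw [hT] at h
    have hr1 : rowSumNorm Bᵀ = colSumNorm B := by
      simp [rowSumNorm, colSumNorm, Matrix.transpose_apply]
    have hr2 : rowSumNorm Bᵀ⁻¹ = colSumNorm B⁻¹ := by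
      rw [← Matrix.transpose_nonsing_inv]
      simp [rowSumNorm, colSumNorm, Matrix.transpose_apply]
    rw [hr1, hr2] at h
    have habsT : absMatrix Aᵀ * absMatrix Aᵀ⁻¹ = (absMatrix A⁻¹ * absMatrix A)ᵀ := by
      rw [← Matrix.transpose_nonsing_inv, Matrix.transpose_mul]
      congr 1
    have hradT : spectralRadius ℂ (absMatrix Aᵀ * absMatrix Aᵀ⁻¹)
        = spectralRadius ℂ (absMatrix A * absMatrix A⁻¹) := by
      rw [habsT]
      have h1 : spectralRadius ℂ ((absMatrix A⁻¹ * absMatrix A)ᵀ)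
          = spectralRadius ℂ (absMatrix A⁻¹ * absMatrix A) := by
        simp only [spectralRadius, spectrum_transpose]
      rw [h1]
      exact spectralRadius_eq_of_diff (spectrum.nonzero_mul_comm _ _)
    rwa [hradT] at h

end Aux
end

section
/- Let $A_1, \ldots, A_M$ be non-defective Schur stable matrices with $A_i = V_i D_i V_i^{-1}$, let $\rho_{\max} = \max_i \rho_i < 1$, and let $\mathcal{G}$ be a switching digraph with weights $\omega^+_{ij} = \ln\|V_j^{-1}V_i\|$. Define the maximum cycle mean $\mu(\mathcal{G}) = \max_C \omega^+(C)/|C|$ over all cycles. If $\tau > \mu(\mathcal{G})/(-\ln\rho_{\max})$, then for any $N_0 \ge 0$ and any switching signal respecting $\mathcal{G}$ whose number of switchings satisfies $N_\sigma(t) \le N_0 + t/\tau$ for all $t$, the solution of $x(t+1) = A_{\sigma(t)}x(t)$ satisfies $\|x(t)\| \le \bar{\bar{\gamma}} \, e^{(\mu(\mathcal{G})/\tau + \ln\rho_{\max}) t} \|x(0)\|$ for some constant $\bar{\bar{\gamma}}$ independent of $t$; in particular $x(t) \to 0$. -/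
open scoped Matrix.Norms.L2Operator

lemma zip_rotate_ofFn {α : Type*} {n : ℕ} [NeZero n] (g : Fin n → α) :
    (List.ofFn g).zip ((List.ofFn g).rotate 1) = List.ofFn (fun i => (g i, g (i + 1))) := by
  apply List.ext_getElem
  · simp
  · intro i h1 h2
    have hn : i < n := by simpa using h2
    have h3 : i < ((List.ofFn g).rotate 1).length := by simpa using hn
    simp only [List.getElem_zip, List.getElem_ofFn]
    have hr : ((List.ofFn g).rotate 1)[i] = g (⟨i, hn⟩ + 1) := by
      have := List.get_rotate (List.ofFn g) 1 ⟨i, h3⟩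
      simp only [List.get_eq_getElem] at this
      rw [this]
      simp only [List.getElem_ofFn]
      congr 1
      ext
      simp only [Fin.add_def, Fin.val_one', Fin.val_mk]
      simp only [List.length_ofFn]
      rw [Nat.add_mod i 1 n, Nat.mod_eq_of_lt hn]
    rw [hr]

lemma cycleWeight_ofFn {α : Type*} (ω : α → α → ℝ) {n : ℕ} [NeZero n] (g : Fin n → α) :
    cycleWeight ω (List.ofFn g) = ∑ i : Fin n, ω (g i) (g (i + 1)) := by
  unfold cycleWeight
  rw [zip_rotate_ofFn, List.map_ofFn, List.sum_ofFn]
  rfl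

/-- Splice out the portion `[i, i+d)` of a sequence. -/
def spl {α : Type*} (f : ℕ → α) (i d : ℕ) : ℕ → α := fun k => if k < i then f k else f (k + d)

lemma spl_walk {α : Type*} {E : α → α → Prop} {f : ℕ → α} (hw : ∀ k, E (f k) (f (k + 1)))
    {i d : ℕ} (hf : f i = f (i + d)) : ∀ k, E (spl f i d k) (spl f i d (k + 1)) := by
  intro k
  unfold spl
  by_cases h1 : k + 1 < i
  · rw [if_pos (by omega), if_pos h1]; exact hw k
  · by_cases h2 : k < i
    · have hki : k + 1 = i := by omega
      rw [if_pos h2, if_neg h1, hki, ← hf, ← hki]; exact hw k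
    · rw [if_neg h2, if_neg h1]
      have : k + 1 + d = (k + d) + 1 := by omega
      rw [this]; exact hw (k + d)

lemma spl_sum {α : Type*} (F : α → α → ℝ) (f : ℕ → α) (i d n : ℕ)
    (hdn : i + d ≤ n) (hf : f i = f (i + d)) :
    ∑ k ∈ Finset.range n, F (f k) (f (k + 1)) =
      (∑ k ∈ Finset.range (n - d), F (spl f i d k) (spl f i d (k + 1))) +
      ∑ k ∈ Finset.Ico i (i + d), F (f k) (f (k + 1)) := by
  have h1 : ∀ k < i, F (spl f i d k) (spl f i d (k + 1)) = F (f k) (f (k + 1)) := by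
    intro k hk
    unfold spl
    rw [if_pos hk]
    by_cases h : k + 1 < i
    · rw [if_pos h]
    · have hki : k + 1 = i := by omega
      rw [if_neg h, hki, ← hf]
  have h2 : ∀ k, i ≤ k → F (spl f i d k) (spl f i d (k + 1)) = F (f (k + d)) (f (k + d + 1)) := by
    intro k hk
    unfold spl
    rw [if_neg (by omega), if_neg (by omega)]
    congr 2
    omega
  have e1 : ∑ k ∈ Finset.range (n - d), F (spl f i d k) (spl f i d (k + 1)) =
      (∑ k ∈ Finset.Ico 0 i, F (f k) (f (k + 1)))
      + ∑ k ∈ Finset.Ico (i + d) n, F (f k) (f (k + 1)) := by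
    rw [Finset.range_eq_Ico, ← Finset.sum_Ico_consecutive _ (Nat.zero_le i) (by omega : i ≤ n - d)]
    congr 1
    · apply Finset.sum_congr rfl
      intro k hk
      exact h1 k (Finset.mem_Ico.mp hk).2
    · rw [Finset.sum_Ico_eq_sum_range, Finset.sum_Ico_eq_sum_range]
      have hl : n - d - i = n - (i + d) := by omega
      rw [hl]
      apply Finset.sum_congr rfl
      intro k _
      rw [h2 (i + k) (by omega)]
      congr 2 <;> omega
  rw [e1]
  rw [add_assoc, add_comm (∑ k ∈ Finset.Ico (i+d) n, _) (∑ k ∈ Finset.Ico i (i+d), _), ← add_assoc]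
  rw [Finset.sum_Ico_consecutive _ (Nat.zero_le i) (by omega : i ≤ i + d)]
  rw [Finset.sum_Ico_consecutive _ (Nat.zero_le (i+d)) hdn]
  rw [Finset.range_eq_Ico]

lemma fin_add_one_val {n : ℕ} [NeZero n] (i : Fin n) :
    ((i + 1 : Fin n) : ℕ) = if i.val + 1 < n then i.val + 1 else 0 := by
  have h := i.isLt
  simp only [Fin.add_def, Fin.val_one']
  rcases Nat.lt_or_ge (i.val + 1) n with h1 | h1
  · rw [if_pos h1, Nat.mod_eq_of_lt (show 1 < n by omega), Nat.mod_eq_of_lt h1]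
  · rw [if_neg (by omega)]
    by_cases hn1 : n = 1
    · subst hn1
      simp
    · rw [Nat.mod_eq_of_lt (show 1 < n by omega)]
      rw [show i.val + 1 = n by omega, Nat.mod_self]

lemma closed_walk_nonpos {M : ℕ} {E : Fin M → Fin M → Prop} {ω : Fin M → Fin M → ℝ}
    (hcyc : ∀ C, IsCycleList E C → cycleWeight ω C ≤ 0) :
    ∀ n, ∀ f : ℕ → Fin M, (∀ k, E (f k) (f (k + 1))) → 1 ≤ n → f n = f 0 →
      ∑ k ∈ Finset.range n, ω (f k) (f (k + 1)) ≤ 0 := by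
  intro n
  induction n using Nat.strong_induction_on with
  | _ n IH =>
    intro f hw hn hfn
    by_cases hinj : Function.Injective (fun i : Fin n => f i.val)
    · -- the walk is a simple cycle
      haveI : NeZero n := ⟨by omega⟩
      set g : Fin n → Fin M := fun i => f i.val with hg
      have hcoh : ∀ i : Fin n, ω (f i.val) (f (i.val + 1)) = ω (g i) (g (i + 1)) := by
        intro i
        have hislt := i.isLt
        have hval := fin_add_one_val i
        congr 1
        simp only [hg]
        by_cases hlast : i.val + 1 < n
        · rw [if_pos hlast] at hval
          rw [hval]
        · rw [if_neg hlast] at hval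
          rw [hval]
          have h2 : f (i.val + 1) = f n := by congr 1; omega
          rw [h2, hfn]
      have hcl : IsCycleList E (List.ofFn g) := by
        refine ⟨?_, List.nodup_ofFn.mpr hinj, ?_⟩
        · intro h
          have := congrArg List.length h
          simp at this
          omega
        · intro p hp
          rw [zip_rotate_ofFn] at hp
          obtain ⟨i, hi⟩ := List.mem_ofFn.mp hp
          rw [← hi]
          simp only [hg]
          have hislt := i.isLt
          have hval := fin_add_one_val i
          by_cases hlast : i.val + 1 < n
          · rw [if_pos hlast] at hval
            rw [hval]
            exact hw i.val
          · rw [if_neg hlast] at hval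
            rw [hval, ← hfn]
            have h2 : f n = f (i.val + 1) := by congr 1; omega
            rw [h2]
            exact hw i.val
      have h0 := hcyc _ hcl
      rw [cycleWeight_ofFn] at h0
      calc ∑ k ∈ Finset.range n, ω (f k) (f (k + 1))
          = ∑ i : Fin n, ω (f i.val) (f (i.val + 1)) :=
            (Fin.sum_univ_eq_sum_range (fun k => ω (f k) (f (k + 1))) n).symm
        _ = ∑ i : Fin n, ω (g i) (g (i + 1)) := Finset.sum_congr rfl fun i _ => hcoh i
        _ ≤ 0 := h0
    · -- find a repeated vertex and splice
      rw [Function.not_injective_iff] at hinj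
      obtain ⟨a', b', hab', hne'⟩ := hinj
      obtain ⟨a, b, hab, hlt⟩ : ∃ a b : Fin n, f a.val = f b.val ∧ a.val < b.val := by
        have hv : a'.val ≠ b'.val := fun h => hne' (Fin.ext h)
        rcases hv.lt_or_gt with h | h
        · exact ⟨a', b', hab', h⟩
        · exact ⟨b', a', hab'.symm, h⟩
      set i := a.val with hi
      set d := b.val - a.val with hd
      have hfi : f i = f (i + d) := by
        have : i + d = b.val := by omega
        rw [this]; exact hab
      have hd1 : 1 ≤ d := by omega
      have hdn : i + d ≤ n := by have := b.isLt; omega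
      have hmid : ∑ k ∈ Finset.Ico i (i + d), ω (f k) (f (k + 1)) ≤ 0 := by
        have h1 := IH d (by have := b.isLt; omega) (fun k => f (i + k))
          (fun k => hw (i + k)) hd1 hfi.symm
        rw [Finset.sum_Ico_eq_sum_range]
        have hdd : i + d - i = d := by omega
        rw [hdd]
        exact h1
      have hspl : ∑ k ∈ Finset.range (n - d), ω (spl f i d k) (spl f i d (k + 1)) ≤ 0 := by
        apply IH (n - d) (by omega) _ (spl_walk hw hfi) (by omega)
        show spl f i d (n - d) = spl f i d 0
        unfold spl
        have hnd : n - d + d = n := by omega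
        by_cases h0 : 0 < i
        · rw [if_neg (by omega), if_pos h0, hnd, hfn]
        · rw [if_neg (by omega), if_neg (by omega), hnd, hfn]
          have hi0 : i = 0 := by omega
          rw [← hi0]
          exact hfi
      rw [spl_sum ω f i d n hdn hfi]
      exact add_nonpos hspl hmid

lemma walk_sum_le {M : ℕ} {E : Fin M → Fin M → Prop} {ω : Fin M → Fin M → ℝ}
    (hcyc : ∀ C, IsCycleList E C → cycleWeight ω C ≤ 0) :
    ∀ n, ∀ f : ℕ → Fin M, (∀ k, E (f k) (f (k + 1))) →
      ∑ k ∈ Finset.range n, ω (f k) (f (k + 1)) ≤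
        M * ∑ p : Fin M × Fin M, |ω p.1 p.2| := by
  intro n
  induction n using Nat.strong_induction_on with
  | _ n IH =>
    intro f hw
    set S := ∑ p : Fin M × Fin M, |ω p.1 p.2| with hS
    have hS0 : 0 ≤ S := Finset.sum_nonneg fun p _ => abs_nonneg _
    by_cases hn : n ≤ M
    · calc ∑ k ∈ Finset.range n, ω (f k) (f (k + 1))
          ≤ ∑ k ∈ Finset.range n, S := by
            apply Finset.sum_le_sum
            intro k _
            calc ω (f k) (f (k + 1)) ≤ |ω (f k) (f (k + 1))| := le_abs_self _
              _ ≤ S := Finset.single_le_sum (f := fun p : Fin M × Fin M => |ω p.1 p.2|)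
                  (fun p _ => abs_nonneg _) (Finset.mem_univ (f k, f (k + 1)))
        _ = n * S := by rw [Finset.sum_const, Finset.card_range, nsmul_eq_mul]
        _ ≤ M * S := by
            apply mul_le_mul_of_nonneg_right _ hS0
            exact_mod_cast hn
    · push_neg at hn
      obtain ⟨a', b', hne', hab'⟩ := Fintype.exists_ne_map_eq_of_card_lt
        (fun i : Fin (M + 1) => f i.val) (by simp)
      obtain ⟨a, b, hab, hlt⟩ : ∃ a b : Fin (M + 1), f a.val = f b.val ∧ a.val < b.val := by
        have hv : a'.val ≠ b'.val := fun h => hne' (Fin.ext h)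
        rcases hv.lt_or_gt with h | h
        · exact ⟨a', b', hab', h⟩
        · exact ⟨b', a', hab'.symm, h⟩
      set i := a.val with hi
      set d := b.val - a.val with hd
      have hfi : f i = f (i + d) := by
        have : i + d = b.val := by omega
        rw [this]; exact hab
      have hd1 : 1 ≤ d := by omega
      have hdn : i + d ≤ n := by have := b.isLt; omega
      have hmid : ∑ k ∈ Finset.Ico i (i + d), ω (f k) (f (k + 1)) ≤ 0 := by
        have h1 := closed_walk_nonpos hcyc d (fun k => f (i + k))
          (fun k => hw (i + k)) hd1 hfi.symm
        rw [Finset.sum_Ico_eq_sum_range]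
        have hdd : i + d - i = d := by omega
        rw [hdd]
        exact h1
      have hspl := IH (n - d) (by omega) (spl f i d) (spl_walk hw hfi)
      rw [spl_sum ω f i d n hdn hfi]
      calc (∑ k ∈ Finset.range (n - d), ω (spl f i d k) (spl f i d (k + 1)))
            + ∑ k ∈ Finset.Ico i (i + d), ω (f k) (f (k + 1))
          ≤ M * S + 0 := add_le_add hspl hmid
        _ = M * S := by ring


/-- `mulVec` as a map on `EuclideanSpace`. -/
noncomputable def mve {N : ℕ} (P : Matrix (Fin N) (Fin N) ℂ) (v : EuclideanSpace ℂ (Fin N)) :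
    EuclideanSpace ℂ (Fin N) :=
  (EuclideanSpace.equiv (Fin N) ℂ).symm (P.mulVec ((EuclideanSpace.equiv (Fin N) ℂ) v))

lemma mve_norm_le {N : ℕ} (P : Matrix (Fin N) (Fin N) ℂ) (v : EuclideanSpace ℂ (Fin N)) :
    ‖mve P v‖ ≤ ‖P‖ * ‖v‖ := Matrix.l2_opNorm_mulVec P v

lemma mve_mve {N : ℕ} (P Q : Matrix (Fin N) (Fin N) ℂ) (v : EuclideanSpace ℂ (Fin N)) :
    mve P (mve Q v) = mve (P * Q) v := by
  unfold mve
  simp only [ContinuousLinearEquiv.apply_symm_apply]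
  rw [Matrix.mulVec_mulVec]

lemma mve_one {N : ℕ} (v : EuclideanSpace ℂ (Fin N)) : mve 1 v = v := by
  unfold mve
  rw [Matrix.one_mulVec]
  simp

lemma mve_apply {N : ℕ} (P : Matrix (Fin N) (Fin N) ℂ) (v : EuclideanSpace ℂ (Fin N)) (j : Fin N) :
    mve P v j = P.mulVec v j := rfl

lemma diag_mve_le {N : ℕ} (Dm : Matrix (Fin N) (Fin N) ℂ) (hD : Dm.IsDiag) (ρ : ℝ) (hρ : 0 ≤ ρ)
    (hd : ∀ j, ‖Dm j j‖ ≤ ρ) (v : EuclideanSpace ℂ (Fin N)) :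
    ‖mve Dm v‖ ≤ ρ * ‖v‖ := by
  have hcoord : ∀ j, mve Dm v j = Dm j j * v j := by
    intro j
    rw [mve_apply]
    unfold Matrix.mulVec dotProduct
    exact Finset.sum_eq_single j (fun k _ hk => by show Dm j k * v k = 0; rw [hD (Ne.symm hk), zero_mul])
      (fun h => absurd (Finset.mem_univ j) h)
  calc ‖mve Dm v‖
      = Real.sqrt (∑ j, ‖mve Dm v j‖ ^ 2) := EuclideanSpace.norm_eq _
    _ ≤ Real.sqrt (∑ j, ρ ^ 2 * ‖v j‖ ^ 2) := by
        apply Real.sqrt_le_sqrt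
        apply Finset.sum_le_sum
        intro j _
        rw [hcoord j, norm_mul]
        have h1 : ‖Dm j j‖ ≤ ρ := hd j
        calc (‖Dm j j‖ * ‖v j‖) ^ 2 ≤ (ρ * ‖v j‖) ^ 2 := by
              apply pow_le_pow_left₀ (by positivity)
              exact mul_le_mul_of_nonneg_right h1 (norm_nonneg _)
          _ = ρ ^ 2 * ‖v j‖ ^ 2 := by ring
    _ = ρ * Real.sqrt (∑ j, ‖v j‖ ^ 2) := by
        rw [← Finset.mul_sum, Real.sqrt_mul (sq_nonneg ρ), Real.sqrt_sq hρ]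
    _ = ρ * ‖v‖ := by rw [EuclideanSpace.norm_eq]

lemma norm_one_ge {N : ℕ} (hN : 0 < N) : (1:ℝ) ≤ ‖(1 : Matrix (Fin N) (Fin N) ℂ)‖ := by
  haveI : Nonempty (Fin N) := ⟨⟨0, hN⟩⟩
  have h1 : (1 : Matrix (Fin N) (Fin N) ℂ) ≠ 0 := one_ne_zero
  have hp : 0 < ‖(1 : Matrix (Fin N) (Fin N) ℂ)‖ := norm_pos_iff.mpr h1
  have h2 : ‖(1 : Matrix (Fin N) (Fin N) ℂ)‖ ≤ ‖(1 : Matrix (Fin N) (Fin N) ℂ)‖ * ‖(1 : Matrix (Fin N) (Fin N) ℂ)‖ := by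
    simpa using norm_mul_le (1 : Matrix (Fin N) (Fin N) ℂ) 1
  nlinarith

lemma map_sub_sum {α : Type*} (F : α → α → ℝ) (μ : ℝ) (l : List (α × α)) :
    (l.map fun p => F p.1 p.2 - μ).sum = (l.map fun p => F p.1 p.2).sum - l.length * μ := by
  induction l with
  | nil => simp
  | cons a l ih => simp [ih]; ring

lemma cycleWeight_nonneg {M : ℕ} (ω : Fin M → Fin M → ℝ)
    (htri : ∀ a b c, ω a c ≤ ω a b + ω b c) (hident : ∀ a, 0 ≤ ω a a)
    (C : List (Fin M)) (hCne : C ≠ []) : 0 ≤ cycleWeight ω C := by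
  have hlen : 0 < C.length := List.length_pos_iff.mpr hCne
  haveI : NeZero C.length := ⟨by omega⟩
  set n := C.length with hn
  set gg : ℕ → Fin M := fun k => C.get ⟨k % n, Nat.mod_lt _ hlen⟩ with hgg
  have hchain : ∀ k, 1 ≤ k →
      ω (gg 0) (gg k) ≤ ∑ i ∈ Finset.range k, ω (gg i) (gg (i + 1)) := by
    intro k hk
    induction k with
    | zero => omega
    | succ k ih =>
      rcases Nat.eq_zero_or_pos k with hk0 | hk0
      · subst hk0; simp
      · calc ω (gg 0) (gg (k+1)) ≤ ω (gg 0) (gg k) + ω (gg k) (gg (k+1)) := htri _ _ _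
          _ ≤ (∑ i ∈ Finset.range k, ω (gg i) (gg (i+1))) + ω (gg k) (gg (k+1)) := by
              have := ih hk0
              linarith
          _ = ∑ i ∈ Finset.range (k+1), ω (gg i) (gg (i+1)) :=
              (Finset.sum_range_succ _ k).symm
  have hgg_val : ∀ i : Fin n, gg i.val = C.get i := by
    intro i
    simp only [hgg]
    congr 1
    exact Fin.ext (Nat.mod_eq_of_lt i.isLt)
  have hgg_succ : ∀ i : Fin n, gg (i.val + 1) = C.get (i + 1) := by
    intro i
    simp only [hgg]
    congr 1
    apply Fin.ext
    simp only [Fin.val_mk]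
    rw [fin_add_one_val i]
    have hislt := i.isLt
    by_cases h : i.val + 1 < n
    · rw [if_pos h, Nat.mod_eq_of_lt h]
    · rw [if_neg h, show i.val + 1 = n by omega, Nat.mod_self]
  have hsum : cycleWeight ω C = ∑ i ∈ Finset.range n, ω (gg i) (gg (i + 1)) := by
    conv_lhs => rw [← List.ofFn_get C]
    rw [cycleWeight_ofFn]
    rw [← Fin.sum_univ_eq_sum_range (fun k => ω (gg k) (gg (k+1))) n]
    exact Finset.sum_congr rfl fun i _ => by rw [hgg_val i, hgg_succ i]
  have h3 : gg n = gg 0 := by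
    simp only [hgg]
    congr 1
    exact Fin.ext (by simp [Nat.mod_self])
  have h2 : ω (gg 0) (gg 0) ≤ cycleWeight ω C := by
    rw [hsum]
    have h4 := hchain n hlen
    rwa [h3] at h4
  have := hident (gg 0)
  linarith

/-- Graph-based average dwell time theorem (non-defective case).  With maximum cycle mean
`μ(𝒢)` of the switching graph with weights `ω⁺ᵢⱼ = ln ‖Vⱼ⁻¹Vᵢ‖`, if
`τ > μ(𝒢)/(-ln ρ_max)` and the switching signal respects `𝒢` and satisfies the average
dwell time condition `N_σ(T) ≤ N₀ + T/τ`, then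
`‖x T‖ ≤ γ̄̄ e^{(μ(𝒢)/τ + ln ρ_max) T} ‖x 0‖` for a constant `γ̄̄` independent of `T`;
in particular `x T → 0`. -/
theorem average_dwell_time_stability_nondefective
    {N M : ℕ} (A : Fin M → Matrix (Fin N) (Fin N) ℝ)
    (V D : Fin M → Matrix (Fin N) (Fin N) ℂ) (ρmax : ℝ)
    (hVunit : ∀ i, IsUnit (V i))
    (hDdiag : ∀ i, (D i).IsDiag)
    (hdecomp : ∀ i, (A i).map Complex.ofReal = V i * D i * (V i)⁻¹)
    (hρmax : ∀ i j, ‖D i j j‖ ≤ ρmax)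
    (hρpos : 0 < ρmax) (hSchur : ρmax < 1)
    (E : Fin M → Fin M → Prop)
    (μ τ N₀ : ℝ)
    (hμ : IsGreatest {r : ℝ | ∃ C, IsCycleList E C ∧
            r = cycleWeight (fun i j => Real.log ‖(V j)⁻¹ * V i‖) C / (C.length : ℝ)} μ)
    (hτpos : 0 < τ) (hτ : μ / (-Real.log ρmax) < τ)
    (hN₀ : 0 ≤ N₀)
    (s : ℕ → Fin M) (t : ℕ → ℕ)
    (ht0 : t 0 = 0) (htmono : StrictMono t)
    (have_dwell : ∀ k T : ℕ, t k ≤ T → (k : ℝ) ≤ N₀ + (T : ℝ) / τ)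
    (hrespect : ∀ k, E (s (k + 1)) (s (k + 2)))
    (σ : ℕ → Fin M)
    (hσ : ∀ k u, t k ≤ u → u < t (k + 1) → σ u = s (k + 1))
    (x : ℕ → EuclideanSpace ℝ (Fin N))
    (hx : ∀ u, x (u + 1) = (A (σ u)).mulVec (x u)) :
    (∃ γ : ℝ, ∀ T : ℕ,
        ‖x T‖ ≤ γ * Real.exp ((μ / τ + Real.log ρmax) * T) * ‖x 0‖) ∧
    Filter.Tendsto x Filter.atTop (nhds 0) := by
  classical
  haveI hMne : Nonempty (Fin M) := ⟨s 0⟩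
  rcases Nat.eq_zero_or_pos N with hN | hN
  · -- trivial case `N = 0`
    subst hN
    haveI : Subsingleton (EuclideanSpace ℝ (Fin 0)) := ⟨fun a b => by ext i; exact i.elim0⟩
    have hx0 : ∀ T, x T = 0 := fun T => Subsingleton.elim _ _
    constructor
    · exact ⟨0, fun T => by rw [hx0 T]; simp⟩
    · have hxconst : x = fun _ => (0 : EuclideanSpace ℝ (Fin 0)) := funext fun T => hx0 T
      rw [hxconst]
      exact tendsto_const_nhds
  haveI : Nonempty (Fin N) := ⟨⟨0, hN⟩⟩
  set ω : Fin M → Fin M → ℝ := fun i j => Real.log ‖(V j)⁻¹ * V i‖ with hωdef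
  have hdet : ∀ i, IsUnit (V i).det := fun i => (Matrix.isUnit_iff_isUnit_det _).mp (hVunit i)
  have hVVinv : ∀ i, V i * (V i)⁻¹ = 1 := fun i => Matrix.mul_nonsing_inv _ (hdet i)
  have hVinvV : ∀ i, (V i)⁻¹ * V i = 1 := fun i => Matrix.nonsing_inv_mul _ (hdet i)
  have hPunit : ∀ i j, IsUnit ((V j)⁻¹ * V i) := by
    intro i j
    apply (Matrix.isUnit_iff_isUnit_det _).mpr
    rw [Matrix.det_mul]
    exact (Matrix.isUnit_nonsing_inv_det _ (hdet j)).mul (hdet i)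
  have hPpos : ∀ i j, (0:ℝ) < ‖(V j)⁻¹ * V i‖ := fun i j =>
    norm_pos_iff.mpr (hPunit i j).ne_zero
  have htri : ∀ a b c, ω a c ≤ ω a b + ω b c := by
    intro a b c
    have hEq : ((V c)⁻¹ * V b) * ((V b)⁻¹ * V a) = (V c)⁻¹ * V a := by
      rw [mul_assoc, ← mul_assoc (V b), hVVinv b, one_mul]
    have h1 : ‖(V c)⁻¹ * V a‖ ≤ ‖(V c)⁻¹ * V b‖ * ‖(V b)⁻¹ * V a‖ := by
      rw [← hEq]; exact norm_mul_le _ _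
    simp only [hωdef]
    calc Real.log ‖(V c)⁻¹ * V a‖
        ≤ Real.log (‖(V c)⁻¹ * V b‖ * ‖(V b)⁻¹ * V a‖) := Real.log_le_log (hPpos a c) h1
      _ = Real.log ‖(V b)⁻¹ * V a‖ + Real.log ‖(V c)⁻¹ * V b‖ := by
          rw [Real.log_mul (ne_of_gt (hPpos b c)) (ne_of_gt (hPpos a b))]
          ring
  have hident : ∀ a, (0:ℝ) ≤ ω a a := by
    intro a
    have h1 : ω a a = Real.log ‖(1 : Matrix (Fin N) (Fin N) ℂ)‖ := by
      simp only [hωdef]; rw [hVinvV a]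
    rw [h1]
    exact Real.log_nonneg (norm_one_ge hN)
  -- the maximum cycle mean is nonnegative
  have hμ0 : 0 ≤ μ := by
    obtain ⟨C, hC, hμeq⟩ := hμ.1
    have hcw : 0 ≤ cycleWeight ω C := cycleWeight_nonneg ω htri hident C hC.1
    rw [hμeq]
    exact div_nonneg hcw (Nat.cast_nonneg _)
  -- every cycle has nonpositive reduced weight
  set ω' : Fin M → Fin M → ℝ := fun i j => ω i j - μ with hω'def
  have hcyc' : ∀ C, IsCycleList E C → cycleWeight ω' C ≤ 0 := by
    intro C hC
    have hlen : 0 < C.length := List.length_pos_iff.mpr hC.1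
    have hmem : cycleWeight ω C / (C.length : ℝ) ≤ μ := hμ.2 ⟨C, hC, rfl⟩
    have hub : cycleWeight ω C ≤ μ * C.length := by
      rw [div_le_iff₀ (by exact_mod_cast hlen)] at hmem
      exact hmem
    have hlen2 : ((C.zip (C.rotate 1)).length : ℝ) = (C.length : ℝ) := by simp
    have hsub : cycleWeight ω' C = cycleWeight ω C - C.length * μ := by
      unfold cycleWeight
      simp only [hω'def]
      rw [map_sub_sum ω μ, hlen2]
    rw [hsub]
    linarith
  set Sabs := ∑ p : Fin M × Fin M, |ω' p.1 p.2| with hSdef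
  have hWsum : ∀ K : ℕ, ∑ k ∈ Finset.range K, ω (s (k+1)) (s (k+2)) ≤ M * Sabs + μ * K := by
    intro K
    have h1 : ∑ k ∈ Finset.range K, ω' (s (k+1)) (s (k+2)) ≤ M * Sabs :=
      walk_sum_le hcyc' K (fun k => s (k+1)) (fun k => hrespect k)
    have h2 : ∑ k ∈ Finset.range K, ω' (s (k+1)) (s (k+2)) =
        (∑ k ∈ Finset.range K, ω (s (k+1)) (s (k+2))) - K * μ := by
      simp only [hω'def]
      rw [Finset.sum_sub_distrib, Finset.sum_const, Finset.card_range, nsmul_eq_mul]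
    rw [h2] at h1
    linarith
  -- analytic setup
  set z : ℕ → EuclideanSpace ℂ (Fin N) :=
    fun u => (EuclideanSpace.equiv (Fin N) ℂ).symm (fun j => (x u j : ℂ)) with hzdef
  have hznorm : ∀ u, ‖z u‖ = ‖x u‖ := by
    intro u
    rw [EuclideanSpace.norm_eq, EuclideanSpace.norm_eq]
    congr 1
    apply Finset.sum_congr rfl
    intro j _
    have : z u j = ((x u j : ℝ) : ℂ) := rfl
    rw [this, Complex.norm_real]
  have hzrec : ∀ u, z (u+1) = mve ((A (σ u)).map Complex.ofReal) (z u) := by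
    intro u
    ext j
    show ((x (u+1) j : ℝ) : ℂ) = ((A (σ u)).map Complex.ofReal).mulVec (fun j => (x u j : ℂ)) j
    rw [hx u]
    show ((Matrix.mulVec (A (σ u)) (x u) j : ℝ) : ℂ) = _
    unfold Matrix.mulVec dotProduct Matrix.map
    push_cast
    rfl
  set w : Fin M → ℕ → EuclideanSpace ℂ (Fin N) := fun i u => mve ((V i)⁻¹) (z u) with hwdef
  have hzw : ∀ i u, z u = mve (V i) (w i u) := by
    intro i u
    simp only [hwdef]
    rw [mve_mve, hVVinv i, mve_one]
  have hstep : ∀ i u, σ u = i → ‖w i (u+1)‖ ≤ ρmax * ‖w i u‖ := by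
    intro i u hσu
    have h1 : w i (u+1) = mve (D i) (w i u) := by
      simp only [hwdef]
      rw [hzrec u, hσu, mve_mve, hdecomp i]
      have h2 : (V i)⁻¹ * (V i * D i * (V i)⁻¹) = D i * (V i)⁻¹ := by
        rw [← mul_assoc, ← mul_assoc, hVinvV i, one_mul]
      rw [h2, ← mve_mve]
    rw [h1]
    exact diag_mve_le (D i) (hDdiag i) ρmax hρpos.le (hρmax i) (w i u)
  have hswitch : ∀ i j u, ‖w j u‖ ≤ Real.exp (ω i j) * ‖w i u‖ := by
    intro i j u
    have h1 : w j u = mve ((V j)⁻¹ * V i) (w i u) := by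
      simp only [hwdef]
      rw [mve_mve, mul_assoc, hVVinv i, mul_one]
    rw [h1]
    calc ‖mve ((V j)⁻¹ * V i) (w i u)‖ ≤ ‖(V j)⁻¹ * V i‖ * ‖w i u‖ := mve_norm_le _ _
      _ = Real.exp (ω i j) * ‖w i u‖ := by
          simp only [hωdef]
          rw [Real.exp_log (hPpos i j)]
  have hseg : ∀ k u, t k ≤ u → ∀ d, u + d ≤ t (k+1) →
      ‖w (s (k+1)) (u+d)‖ ≤ ρmax ^ d * ‖w (s (k+1)) u‖ := by
    intro k u hu d
    induction d with
    | zero => intro _; simpa using le_refl _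
    | succ d ih =>
      intro hd
      have hd' : u + d ≤ t (k+1) := by omega
      have hσu : σ (u+d) = s (k+1) := hσ k (u+d) (by omega) (by omega)
      have h1 : ‖w (s (k+1)) (u+d+1)‖ ≤ ρmax * ‖w (s (k+1)) (u+d)‖ := hstep _ _ hσu
      have h2 := ih hd'
      calc ‖w (s (k+1)) (u + (d+1))‖ = ‖w (s (k+1)) (u+d+1)‖ := rfl
        _ ≤ ρmax * ‖w (s (k+1)) (u+d)‖ := h1
        _ ≤ ρmax * (ρmax ^ d * ‖w (s (k+1)) u‖) := mul_le_mul_of_nonneg_left h2 hρpos.le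
        _ = ρmax ^ (d+1) * ‖w (s (k+1)) u‖ := by ring
  have hmain : ∀ k, ‖w (s (k+1)) (t k)‖ ≤
      Real.exp (∑ j ∈ Finset.range k, ω (s (j+1)) (s (j+2))) * ρmax ^ (t k) * ‖w (s 1) 0‖ := by
    intro k
    induction k with
    | zero => rw [ht0]; simp
    | succ k ih =>
      have htle : t k ≤ t (k+1) := le_of_lt (htmono (Nat.lt_succ_self k))
      have hseg1 : ‖w (s (k+1)) (t (k+1))‖ ≤ ρmax ^ (t (k+1) - t k) * ‖w (s (k+1)) (t k)‖ := by
        have h := hseg k (t k) le_rfl (t (k+1) - t k) (by omega)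
        rwa [Nat.add_sub_cancel' htle] at h
      have hnn1 : (0:ℝ) ≤ ρmax ^ (t (k+1) - t k) := by positivity
      calc ‖w (s (k+1+1)) (t (k+1))‖
          ≤ Real.exp (ω (s (k+1)) (s (k+2))) * ‖w (s (k+1)) (t (k+1))‖ :=
            hswitch (s (k+1)) (s (k+2)) (t (k+1))
        _ ≤ Real.exp (ω (s (k+1)) (s (k+2))) * (ρmax ^ (t (k+1) - t k) * ‖w (s (k+1)) (t k)‖) :=
            mul_le_mul_of_nonneg_left hseg1 (Real.exp_nonneg _)
        _ ≤ Real.exp (ω (s (k+1)) (s (k+2))) * (ρmax ^ (t (k+1) - t k) *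
              (Real.exp (∑ j ∈ Finset.range k, ω (s (j+1)) (s (j+2))) * ρmax ^ (t k) *
                ‖w (s 1) 0‖)) := by
            apply mul_le_mul_of_nonneg_left _ (Real.exp_nonneg _)
            exact mul_le_mul_of_nonneg_left ih hnn1
        _ = Real.exp (∑ j ∈ Finset.range (k+1), ω (s (j+1)) (s (j+2))) * ρmax ^ (t (k+1)) *
              ‖w (s 1) 0‖ := by
            have hρsplit : ρmax ^ (t (k+1) - t k) * ρmax ^ (t k) = ρmax ^ (t (k+1)) := by
              rw [← pow_add]
              congr 1
              omega
            rw [Finset.sum_range_succ, Real.exp_add, ← hρsplit]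
            ring
  -- constants
  set CV1 := Finset.univ.sup' Finset.univ_nonempty (fun i : Fin M => ‖V i‖) with hCV1def
  set CV2 := Finset.univ.sup' Finset.univ_nonempty (fun i : Fin M => ‖(V i)⁻¹‖) with hCV2def
  have hCV1 : ∀ i, ‖V i‖ ≤ CV1 :=
    fun i => Finset.le_sup' (fun i : Fin M => ‖V i‖) (Finset.mem_univ i)
  have hCV2 : ∀ i, ‖(V i)⁻¹‖ ≤ CV2 :=
    fun i => Finset.le_sup' (fun i : Fin M => ‖(V i)⁻¹‖) (Finset.mem_univ i)
  have hCV1nn : 0 ≤ CV1 := le_trans (norm_nonneg _) (hCV1 (s 0))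
  have hCV2nn : 0 ≤ CV2 := le_trans (norm_nonneg _) (hCV2 (s 0))
  set γ0 := CV1 * CV2 * Real.exp (M * Sabs + μ * N₀) with hγ0def
  have hbound : ∀ T : ℕ, ‖x T‖ ≤ γ0 * Real.exp ((μ / τ + Real.log ρmax) * T) * ‖x 0‖ := by
    intro T
    obtain ⟨K, hK1, hK2⟩ : ∃ K, t K ≤ T ∧ T < t (K + 1) := by
      refine ⟨Nat.findGreatest (fun k => t k ≤ T) T, ?_, ?_⟩
      · exact Nat.findGreatest_spec (P := fun k => t k ≤ T) (m := 0) (Nat.zero_le T)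
          (show t 0 ≤ T by rw [ht0]; exact Nat.zero_le T)
      · by_contra hcon
        push_neg at hcon
        have h1 : Nat.findGreatest (fun k => t k ≤ T) T + 1 ≤ T :=
          le_trans htmono.le_apply hcon
        exact (Nat.findGreatest_is_greatest (Nat.lt_succ_self _) h1) hcon
    set W := ∑ j ∈ Finset.range K, ω (s (j+1)) (s (j+2)) with hWdef
    have e2 : ‖z T‖ ≤ ‖V (s (K+1))‖ * ‖w (s (K+1)) T‖ := by
      rw [hzw (s (K+1)) T]
      exact mve_norm_le _ _
    have e3 : ‖w (s (K+1)) T‖ ≤ ρmax ^ (T - t K) * ‖w (s (K+1)) (t K)‖ := by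
      have h := hseg K (t K) le_rfl (T - t K) (by omega)
      rwa [Nat.add_sub_cancel' hK1] at h
    have e4 : ‖w (s (K+1)) (t K)‖ ≤ Real.exp W * ρmax ^ (t K) * ‖w (s 1) 0‖ := hmain K
    have e5 : ‖w (s 1) 0‖ ≤ ‖(V (s 1))⁻¹‖ * ‖z 0‖ := by
      simp only [hwdef]
      exact mve_norm_le _ _
    have hρTsplit : ρmax ^ (T - t K) * ρmax ^ (t K) = ρmax ^ T := by
      rw [← pow_add]
      congr 1
      omega
    have hx0 : ‖z 0‖ = ‖x 0‖ := hznorm 0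
    have hwTnn : (0:ℝ) ≤ ‖w (s (K+1)) (t K)‖ := norm_nonneg _
    have hA : ‖x T‖ ≤ CV1 * CV2 * Real.exp W * ρmax ^ T * ‖x 0‖ := by
      have c1 : ‖x T‖ ≤ ‖V (s (K+1))‖ * ‖w (s (K+1)) T‖ := by rw [← hznorm T]; exact e2
      have c2 : ‖w (s (K+1)) T‖ ≤ ρmax ^ (T - t K) *
          (Real.exp W * ρmax ^ (t K) * (‖(V (s 1))⁻¹‖ * ‖x 0‖)) := by
        calc ‖w (s (K+1)) T‖ ≤ ρmax ^ (T - t K) * ‖w (s (K+1)) (t K)‖ := e3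
          _ ≤ ρmax ^ (T - t K) * (Real.exp W * ρmax ^ (t K) * ‖w (s 1) 0‖) :=
              mul_le_mul_of_nonneg_left e4 (pow_nonneg hρpos.le _)
          _ ≤ ρmax ^ (T - t K) * (Real.exp W * ρmax ^ (t K) * (‖(V (s 1))⁻¹‖ * ‖x 0‖)) := by
              apply mul_le_mul_of_nonneg_left _ (pow_nonneg hρpos.le _)
              apply mul_le_mul_of_nonneg_left _ (mul_nonneg (Real.exp_nonneg _) (pow_nonneg hρpos.le _))
              rw [← hx0]
              exact e5
      have c3 : ‖x T‖ ≤ ‖V (s (K+1))‖ * (ρmax ^ (T - t K) *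
          (Real.exp W * ρmax ^ (t K) * (‖(V (s 1))⁻¹‖ * ‖x 0‖))) :=
        le_trans c1 (mul_le_mul_of_nonneg_left c2 (norm_nonneg _))
      have c4 : ‖V (s (K+1))‖ * (ρmax ^ (T - t K) *
          (Real.exp W * ρmax ^ (t K) * (‖(V (s 1))⁻¹‖ * ‖x 0‖)))
          ≤ CV1 * (ρmax ^ (T - t K) * (Real.exp W * ρmax ^ (t K) * (CV2 * ‖x 0‖))) := by
        apply mul_le_mul (hCV1 _) _
          (mul_nonneg (pow_nonneg hρpos.le _) (mul_nonneg
            (mul_nonneg (Real.exp_nonneg _) (pow_nonneg hρpos.le _))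
            (mul_nonneg (norm_nonneg _) (norm_nonneg _)))) hCV1nn
        apply mul_le_mul_of_nonneg_left _ (pow_nonneg hρpos.le _)
        apply mul_le_mul_of_nonneg_left _ (mul_nonneg (Real.exp_nonneg _) (pow_nonneg hρpos.le _))
        exact mul_le_mul_of_nonneg_right (hCV2 _) (norm_nonneg _)
      calc ‖x T‖ ≤ CV1 * (ρmax ^ (T - t K) * (Real.exp W * ρmax ^ (t K) * (CV2 * ‖x 0‖))) :=
            le_trans c3 c4
        _ = CV1 * CV2 * Real.exp W * (ρmax ^ (T - t K) * ρmax ^ (t K)) * ‖x 0‖ := by ring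
        _ = CV1 * CV2 * Real.exp W * ρmax ^ T * ‖x 0‖ := by rw [hρTsplit]
    have hWle : W ≤ M * Sabs + μ * N₀ + (μ / τ) * T := by
      have h1 : W ≤ M * Sabs + μ * K := hWsum K
      have h2 : (K : ℝ) ≤ N₀ + (T : ℝ) / τ := have_dwell K T hK1
      have h3 : μ * K ≤ μ * (N₀ + (T : ℝ) / τ) := mul_le_mul_of_nonneg_left h2 hμ0
      have h4 : μ * (N₀ + (T : ℝ) / τ) = μ * N₀ + (μ / τ) * T := by
        field_simp
      linarith
    have hρT : (ρmax : ℝ) ^ T = Real.exp ((T : ℝ) * Real.log ρmax) := by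
      rw [Real.exp_nat_mul, Real.exp_log hρpos]
    have hB : CV1 * CV2 * Real.exp W * ρmax ^ T * ‖x 0‖
        ≤ CV1 * CV2 * Real.exp (M * Sabs + μ * N₀ + (μ / τ) * T) * ρmax ^ T * ‖x 0‖ := by
      apply mul_le_mul_of_nonneg_right _ (norm_nonneg _)
      apply mul_le_mul_of_nonneg_right _ (pow_nonneg hρpos.le T)
      exact mul_le_mul_of_nonneg_left (Real.exp_le_exp.mpr hWle) (mul_nonneg hCV1nn hCV2nn)
    have hC : CV1 * CV2 * Real.exp (M * Sabs + μ * N₀ + (μ / τ) * T) * ρmax ^ T * ‖x 0‖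
        = γ0 * Real.exp ((μ / τ + Real.log ρmax) * T) * ‖x 0‖ := by
      have h1 : Real.exp ((M:ℝ) * Sabs + μ * N₀ + μ / τ * (T:ℝ)) =
          Real.exp ((M:ℝ) * Sabs + μ * N₀) * Real.exp (μ / τ * (T:ℝ)) := by
        rw [← Real.exp_add]
      have h2 : Real.exp ((μ / τ + Real.log ρmax) * (T:ℝ)) =
          Real.exp (μ / τ * (T:ℝ)) * Real.exp ((T:ℝ) * Real.log ρmax) := by
        rw [← Real.exp_add]
        congr 1
        ring
      rw [hρT, hγ0def, h1, h2]
      ring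
    calc ‖x T‖ ≤ CV1 * CV2 * Real.exp W * ρmax ^ T * ‖x 0‖ := hA
      _ ≤ CV1 * CV2 * Real.exp (M * Sabs + μ * N₀ + (μ / τ) * T) * ρmax ^ T * ‖x 0‖ := hB
      _ = γ0 * Real.exp ((μ / τ + Real.log ρmax) * T) * ‖x 0‖ := hC
  refine ⟨⟨γ0, hbound⟩, ?_⟩
  -- convergence to zero
  have hlogneg : Real.log ρmax < 0 := Real.log_neg hρpos hSchur
  have hc : μ / τ + Real.log ρmax < 0 := by
    have h1 : μ < τ * (-Real.log ρmax) := (div_lt_iff₀ (neg_pos.mpr hlogneg)).mp hτ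
    have h2 : μ / τ < -Real.log ρmax := by
      rw [div_lt_iff₀ hτpos]
      linarith
    linarith
  have h1 : Filter.Tendsto (fun T : ℕ => (μ / τ + Real.log ρmax) * (T : ℝ))
      Filter.atTop Filter.atBot :=
    (Filter.tendsto_const_mul_atBot_of_neg hc).mpr tendsto_natCast_atTop_atTop
  have h2 : Filter.Tendsto (fun T : ℕ => Real.exp ((μ / τ + Real.log ρmax) * (T : ℝ)))
      Filter.atTop (nhds 0) := Real.tendsto_exp_atBot.comp h1
  have h3 : Filter.Tendsto (fun T : ℕ => γ0 * Real.exp ((μ / τ + Real.log ρmax) * (T : ℝ)) * ‖x 0‖)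
      Filter.atTop (nhds 0) := by
    have := (h2.const_mul γ0).mul_const ‖x 0‖
    simpa using this
  rw [tendsto_zero_iff_norm_tendsto_zero]
  exact squeeze_zero (fun T => norm_nonneg _) hbound h3
end

section
/- Let $A_1, \ldots, A_M \in \mathbb{R}^{N\times N}$ admit decompositions $A_i = P_i J_i P_i^{-1}$ with $\|J_i\| < 1$ for all $i$, and let $\mathcal{G}$ be a switching digraph with weights $\omega^+_{ij} = \ln\|P_j^{-1}P_i\|$ and $\omega^-_{ij} = -\ln\|J_i\| > 0$. If $\tau > \nu(\mathcal{G})$, the maximum cycle ratio, then every solution of the switched system $x(t+1) = A_{\sigma(t)}x(t)$ with switching signal respecting $\mathcal{G}$ and dwell times $t_k - t_{k-1} \ge \tau$ converges to zero. -/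
open scoped Matrix.Norms.L2Operator

set_option maxHeartbeats 1000000

namespace DwellAux

variable {V : Type*}

/-- sum of weights over consecutive pairs of a list -/
def edgeSum (w : V → V → ℝ) (l : List V) : ℝ :=
  ((l.zip l.tail).map fun p => w p.1 p.2).sum

@[simp] lemma edgeSum_nil (w : V → V → ℝ) : edgeSum w [] = 0 := rfl

@[simp] lemma edgeSum_singleton (w : V → V → ℝ) (a : V) : edgeSum w [a] = 0 := rfl

@[simp] lemma edgeSum_cons_cons (w : V → V → ℝ) (a b : V) (l : List V) :
    edgeSum w (a :: b :: l) = w a b + edgeSum w (b :: l) := by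
  simp [edgeSum]

lemma zip_append_left (c : List V) : ∀ (a b : List V), c.length ≤ a.length →
    (a ++ b).zip c = a.zip c := by
  induction c with
  | nil => simp
  | cons x xs ih =>
    intro a b h
    cases a with
    | nil => simp at h
    | cons y ys =>
      simp only [List.cons_append, List.zip_cons_cons, List.cons.injEq, true_and]
      exact ih ys b (by simpa using h)

lemma cycleWeight_eq_edgeSum (w : V → V → ℝ) (v : V) (l : List V) :
    cycleWeight w (v :: l) = edgeSum w (v :: l ++ [v]) := by
  have h1 : (v :: l).rotate 1 = l ++ [v] := by
    rw [List.rotate_cons_succ, List.rotate_zero]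
  have h2 : (v :: l ++ [v]).tail = l ++ [v] := by simp
  have h3 : (v :: l ++ [v]).zip (l ++ [v]) = (v :: l).zip (l ++ [v]) := by
    have := zip_append_left (l ++ [v]) (v :: l) [v] (by simp)
    simpa using this
  rw [cycleWeight, edgeSum, h2, h1, h3]

lemma edgeSum_append (w : V → V → ℝ) :
    ∀ (l₁ : List V) (v : V) (l₂ : List V),
    edgeSum w (l₁ ++ v :: l₂) = edgeSum w (l₁ ++ [v]) + edgeSum w (v :: l₂) := by
  intro l₁
  induction l₁ with
  | nil => simp
  | cons a l ih =>
    intro v l₂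
    cases l with
    | nil => simp [edgeSum_cons_cons]
    | cons b l' =>
      simp only [List.cons_append, edgeSum_cons_cons]
      have := ih v l₂
      simp only [List.cons_append] at this
      rw [this]; ring

end DwellAux

namespace DwellAux
variable {V : Type*}

lemma exists_first_dup {l : List V} (h : ¬ l.Nodup) :
    ∃ (l₁ : List V) (v : V) (l₂ l₃ : List V),
      l = l₁ ++ v :: (l₂ ++ v :: l₃) ∧ (v :: l₂).Nodup := by
  induction l with
  | nil => simp at h
  | cons a l ih =>
    by_cases hl : l.Nodup
    · have ha : a ∈ l := by
        by_contra ha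
        exact h (List.nodup_cons.2 ⟨ha, hl⟩)
      obtain ⟨s, u, rfl⟩ := List.append_of_mem ha
      have hs : a ∉ s := by
        have := (List.nodup_append.1 hl).2.2
        intro hmem
        exact this a hmem a List.mem_cons_self rfl
      exact ⟨[], a, s, u, by simp, List.nodup_cons.2 ⟨hs, (List.nodup_append.1 hl).1⟩⟩
    · obtain ⟨l₁, v, l₂, l₃, rfl, hnd⟩ := ih hl
      exact ⟨a :: l₁, v, l₂, l₃, rfl, hnd⟩

lemma chain'_pairs {E : V → V → Prop} :
    ∀ {l : List V}, List.Chain' E l → ∀ p ∈ l.zip l.tail, E p.1 p.2 := by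
  intro l
  induction l with
  | nil => intro _ p hp; simp at hp
  | cons a l ih =>
    intro h p hp
    cases l with
    | nil => simp at hp
    | cons b l' =>
      simp only [List.Chain'] at h
      rw [List.isChain_cons_cons] at h
      simp only [List.tail_cons, List.zip_cons_cons, List.mem_cons] at hp
      rcases hp with rfl | hp
      · exact h.1
      · exact ih h.2 p hp

/-- extract the cycle: derives cycle property and remaining-walk chain -/
lemma cycle_of_decomp {E : V → V → Prop} {l₁ l₂ l₃ : List V} {v : V}
    (hch : List.Chain' E (l₁ ++ v :: (l₂ ++ v :: l₃)))
    (hnd : (v :: l₂).Nodup) :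
    IsCycleList E (v :: l₂) ∧ List.Chain' E (l₁ ++ v :: l₃) := by
  simp only [List.Chain'] at hch
  rw [List.isChain_append] at hch
  obtain ⟨h1, h2, h3⟩ := hch
  have h2' : List.Chain' E ((v :: l₂) ++ v :: l₃) := by simpa [List.Chain'] using h2
  simp only [List.Chain'] at h2'
  rw [List.isChain_append] at h2'
  obtain ⟨hc1, hc2, hc3⟩ := h2'
  constructor
  · refine ⟨by simp, hnd, ?_⟩
    have hchain : List.Chain' E ((v :: l₂) ++ [v]) := by
      simp only [List.Chain']
      rw [List.isChain_append]
      refine ⟨hc1, List.isChain_singleton v, ?_⟩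
      intro y hy z hz
      simp only [List.head?_cons, Option.mem_def, Option.some.injEq] at hz
      subst hz
      exact hc3 y hy v (by simp)
    intro p hp
    have hrot : (v :: l₂).rotate 1 = l₂ ++ [v] := by
      rw [List.rotate_cons_succ, List.rotate_zero]
    rw [hrot] at hp
    have hz : (v :: l₂).zip (l₂ ++ [v]) = ((v :: l₂) ++ [v]).zip (((v :: l₂) ++ [v]).tail) := by
      have : ((v :: l₂) ++ [v]).tail = l₂ ++ [v] := by simp
      rw [this]
      exact (zip_append_left (l₂ ++ [v]) (v :: l₂) [v] (by simp)).symm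
    rw [hz] at hp
    exact chain'_pairs hchain p hp
  · simp only [List.Chain']
    rw [List.isChain_append]
    refine ⟨h1, hc2, ?_⟩
    intro y hy z hz
    exact h3 y hy z (by simpa using hz)

lemma edgeSum_decomp (w : V → V → ℝ) (l₁ l₂ l₃ : List V) (v : V) :
    edgeSum w (l₁ ++ v :: (l₂ ++ v :: l₃)) =
      edgeSum w (l₁ ++ v :: l₃) + cycleWeight w (v :: l₂) := by
  rw [cycleWeight_eq_edgeSum]
  rw [edgeSum_append w l₁ v (l₂ ++ v :: l₃), edgeSum_append w l₁ v l₃]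
  have : edgeSum w (v :: (l₂ ++ v :: l₃)) =
      edgeSum w (v :: l₂ ++ [v]) + edgeSum w (v :: l₃) := by
    have := edgeSum_append w (v :: l₂) v l₃
    simpa using this
  rw [this]; ring

end DwellAux

namespace DwellAux

lemma edgeSum_le (w : V → V → ℝ) {W : ℝ} (hw : ∀ i j, w i j ≤ W) (hW : 0 ≤ W)
    (l : List V) : edgeSum w l ≤ l.length * W := by
  have hlen : ((l.zip l.tail).map fun p => w p.1 p.2).length ≤ l.length := by
    rw [List.length_map, List.length_zip]
    exact min_le_left _ _
  calc edgeSum w l ≤ ((l.zip l.tail).map fun p => w p.1 p.2).length • W := by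
        apply List.sum_le_card_nsmul
        intro x hx
        simp only [List.mem_map] at hx
        obtain ⟨p, _, rfl⟩ := hx
        exact hw p.1 p.2
    _ = ((l.zip l.tail).map fun p => w p.1 p.2).length * W := by
        rw [nsmul_eq_mul]
    _ ≤ l.length * W := by
        apply mul_le_mul_of_nonneg_right _ hW
        exact_mod_cast hlen

lemma walk_bound {M : ℕ} (hM : 0 < M) (E : Fin M → Fin M → Prop) (w : Fin M → Fin M → ℝ)
    {W ε : ℝ} (hw : ∀ i j, w i j ≤ W) (hW : 0 ≤ W) (hε : 0 < ε)
    (hcyc : ∀ c, IsCycleList E c → cycleWeight w c ≤ -ε) :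
    ∀ n (l : List (Fin M)), l.length = n → List.Chain' E l →
      edgeSum w l ≤ M * W + ε - ε * l.length / M := by
  intro n
  induction n using Nat.strong_induction_on with
  | _ n ih =>
    intro l hlen hch
    by_cases hnd : l.Nodup
    · have hlenM : l.length ≤ M := by
        simpa using hnd.length_le_card
      have h1 : edgeSum w l ≤ M * W := by
        calc edgeSum w l ≤ l.length * W := edgeSum_le w hw hW l
          _ ≤ M * W := by
              apply mul_le_mul_of_nonneg_right _ hW
              exact_mod_cast hlenM
      have h2 : ε * l.length / M ≤ ε := by
        rw [div_le_iff₀ (by exact_mod_cast hM)]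
        apply mul_le_mul_of_nonneg_left _ hε.le
        exact_mod_cast hlenM
      linarith
    · obtain ⟨l₁, v, l₂, l₃, rfl, hnd2⟩ := exists_first_dup hnd
      obtain ⟨hcycle, hch'⟩ := cycle_of_decomp hch hnd2
      have hWc : cycleWeight w (v :: l₂) ≤ -ε := hcyc _ hcycle
      set l' := l₁ ++ v :: l₃ with hl'
      have hlenlt : l'.length < n := by
        rw [← hlen]
        simp [hl']
      have hIH : edgeSum w l' ≤ M * W + ε - ε * l'.length / M :=
        ih l'.length hlenlt l' rfl hch'
      have hcyclen : (l₂.length : ℝ) + 1 ≤ M := by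
        have h := hnd2.length_le_card
        simp only [List.length_cons, Fintype.card_fin] at h
        exact_mod_cast h
      have hsum := edgeSum_decomp w l₁ l₂ l₃ v
      have hlen' : ((l₁ ++ v :: (l₂ ++ v :: l₃)).length : ℝ) =
          (l'.length : ℝ) + (l₂.length + 1) := by
        simp [hl']; push_cast; ring
      rw [hsum, hlen']
      have hdiv : ε * ((l'.length : ℝ) + (l₂.length + 1)) / M
          ≤ ε * l'.length / M + ε := by
        rw [div_le_iff₀ (by exact_mod_cast hM), add_mul, mul_add]
        have h5 : ε * ((l₂.length : ℝ) + 1) ≤ ε * M :=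
          mul_le_mul_of_nonneg_left hcyclen hε.le
        have h3 : ε * (l'.length : ℝ) / M * M = ε * l'.length := by
          field_simp
        rw [h3]
        linarith
      linarith

lemma edgeSum_map_range (w : V → V → ℝ) :
    ∀ (n : ℕ) (f : ℕ → V),
      edgeSum w ((List.range (n + 1)).map f) = ∑ j ∈ Finset.range n, w (f j) (f (j + 1)) := by
  intro n
  induction n with
  | zero => intro f; simp [List.range_succ]
  | succ n ih =>
    intro f
    have h1 : List.range (n + 2) = 0 :: List.map Nat.succ (List.range (n + 1)) :=
      List.range_succ_eq_map (n := n + 1)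
    have h2 : List.range (n + 1) = 0 :: List.map Nat.succ (List.range n) :=
      List.range_succ_eq_map (n := n)
    rw [h1]
    simp only [List.map_cons, List.map_map]
    have h3 : List.map (f ∘ Nat.succ) (List.range (n + 1)) =
        (List.range (n + 1)).map (fun j => f (j + 1)) := by
      simp [Function.comp]
    have h4 : (List.range (n+1)).map (fun j => f (j+1)) =
        f 1 :: List.map ((fun j => f (j+1)) ∘ Nat.succ) (List.range n) := by
      rw [h2]; simp
    rw [h3, h4, edgeSum_cons_cons, ← h4, ih (fun j => f (j + 1))]
    rw [Finset.sum_range_succ' (fun j => w (f j) (f (j+1))) n]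
    simp
    ring

end DwellAux

namespace DwellAux

lemma sum_map_sub {α : Type*} (τ : ℝ) (f g : α → ℝ) :
    ∀ (L : List α), (L.map fun p => f p - τ * g p).sum
      = (L.map f).sum - τ * (L.map g).sum := by
  intro L
  induction L with
  | nil => simp
  | cons a L ih => simp [ih]; ring

lemma cycleWeight_sub {V : Type*} (τ : ℝ) (f : V → V → ℝ) (g : V → ℝ) (c : List V) :
    cycleWeight (fun i j => f i j - τ * g i) c
      = cycleWeight f c - τ * cycleWeight (fun i _ => g i) c := by
  unfold cycleWeight
  exact sum_map_sub τ (fun p => f p.1 p.2) (fun p => g p.1) (c.zip (c.rotate 1))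

lemma map_pow_ofReal {n : ℕ} (B : Matrix (Fin n) (Fin n) ℝ) (d : ℕ) :
    (B ^ d).map Complex.ofReal = (B.map Complex.ofReal) ^ d := by
  have h : ∀ C : Matrix (Fin n) (Fin n) ℝ,
      C.map Complex.ofReal = Complex.ofRealHom.mapMatrix C := by
    intro C
    rw [RingHom.mapMatrix_apply]
    rfl
  rw [h, h, map_pow]

lemma mulVec_map_ofReal {n : ℕ} (B : Matrix (Fin n) (Fin n) ℝ) (v : Fin n → ℝ) :
    (B.map Complex.ofReal).mulVec (fun j => (v j : ℂ)) = fun i => ((B.mulVec v i : ℝ) : ℂ) := by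
  funext i
  simp only [Matrix.mulVec, dotProduct, Matrix.map_apply]
  push_cast
  rfl

lemma conj_pow {n : ℕ} (P J : Matrix (Fin n) (Fin n) ℂ) (h : IsUnit P.det) :
    ∀ d : ℕ, (P * J * P⁻¹) ^ d = P * J ^ d * P⁻¹ := by
  intro d
  induction d with
  | zero => simp [Matrix.mul_nonsing_inv P h]
  | succ d ih =>
    rw [pow_succ, ih, pow_succ]
    have : P * J ^ d * P⁻¹ * (P * J * P⁻¹) = P * J ^ d * (P⁻¹ * P) * J * P⁻¹ := by
      noncomm_ring
    rw [this, Matrix.nonsing_inv_mul P h]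
    noncomm_ring

lemma exists_interval {t : ℕ → ℕ} (ht0 : t 0 = 0) (hm : StrictMono t) (u : ℕ) :
    ∃ k, t k ≤ u ∧ u < t (k + 1) := by
  have hex : ∃ n, u < t n := ⟨u + 1, Nat.lt_of_lt_of_le (Nat.lt_succ_self u) hm.le_apply⟩
  classical
  let k₀ := Nat.find hex
  have hk₀ : u < t k₀ := Nat.find_spec hex
  have hk₀pos : 0 < k₀ := by
    rcases Nat.eq_zero_or_pos k₀ with h | h
    · exfalso; rw [h, ht0] at hk₀; omega
    · exact h
  refine ⟨k₀ - 1, ?_, ?_⟩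
  · have := Nat.find_min hex (m := k₀ - 1) (by omega)
    omega
  · have : k₀ - 1 + 1 = k₀ := by omega
    rw [this]; exact hk₀

end DwellAux


open DwellAux

/-- Graph-based minimum dwell time theorem (defective case).  The subsystem matrices
admit decompositions `Aᵢ = Pᵢ Jᵢ Pᵢ⁻¹` with `‖Jᵢ‖ < 1` (spectral norm); the switching
graph has weights `ω⁺ᵢⱼ = ln ‖Pⱼ⁻¹Pᵢ‖` and `ω⁻ᵢⱼ = -ln ‖Jᵢ‖ > 0`.  If the dwell time
`τ` exceeds the maximum cycle ratio `ν(𝒢)`, then every solution of the switched system,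
with switching signal respecting `𝒢` and all intervals at least `τ`, converges to zero. -/
theorem min_dwell_time_stability_defective
    {N M : ℕ} (A : Fin M → Matrix (Fin N) (Fin N) ℝ)
    (P J : Fin M → Matrix (Fin N) (Fin N) ℂ)
    (hPunit : ∀ i, IsUnit (P i))
    (hdecomp : ∀ i, (A i).map Complex.ofReal = P i * J i * (P i)⁻¹)
    (hJpos : ∀ i, 0 < ‖J i‖) (hJ : ∀ i, ‖J i‖ < 1)
    (E : Fin M → Fin M → Prop)
    (ν τ : ℝ)
    (hν : IsGreatest {r : ℝ | ∃ C, IsCycleList E C ∧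
            r = cycleWeight (fun i j => Real.log ‖(P j)⁻¹ * P i‖) C /
                cycleWeight (fun i _ => -Real.log ‖J i‖) C} ν)
    (hτ : ν < τ)
    (s : ℕ → Fin M) (t : ℕ → ℕ)
    (ht0 : t 0 = 0) (htmono : StrictMono t)
    (hdwell : ∀ k, τ ≤ ((t (k + 1) - t k : ℕ) : ℝ))
    (hrespect : ∀ k, E (s (k + 1)) (s (k + 2)))
    (σ : ℕ → Fin M)
    (hσ : ∀ k u, t k ≤ u → u < t (k + 1) → σ u = s (k + 1))
    (x : ℕ → Fin N → ℝ)
    (hx : ∀ u, x (u + 1) = (A (σ u)).mulVec (x u)) :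
    Filter.Tendsto x Filter.atTop (nhds 0) := by
  classical
  -- trivial case N = 0
  rcases Nat.eq_zero_or_pos N with hN | hN
  · subst hN
    have : x = fun _ => 0 := by
      funext u i; exact i.elim0
    rw [this]
    exact tendsto_const_nhds
  haveI : Nonempty (Fin M) := ⟨s 0⟩
  have hM : 0 < M := Fin.pos (s 0)
  haveI : Nonempty (Fin N) := ⟨⟨0, hN⟩⟩
  -- basic notation
  set ωp : Fin M → Fin M → ℝ := fun i j => Real.log ‖(P j)⁻¹ * P i‖ with hωp
  set ωm : Fin M → ℝ := fun i => -Real.log ‖J i‖ with hωm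
  set w : Fin M → Fin M → ℝ := fun i j => ωp i j - τ * ωm i with hw
  have hPdet : ∀ i, IsUnit (P i).det := fun i => (Matrix.isUnit_iff_isUnit_det _).1 (hPunit i)
  have hωmpos : ∀ i, 0 < ωm i := by
    intro i
    simp only [hωm, neg_pos]
    exact Real.log_neg (hJpos i) (hJ i)
  -- the minimum of ωm
  obtain ⟨i₀, -, hi₀⟩ := Finset.exists_min_image Finset.univ ωm ⟨Classical.arbitrary _, Finset.mem_univ _⟩
  set m := ωm i₀ with hmdef
  have hmpos : 0 < m := hωmpos i₀
  have hmle : ∀ i, m ≤ ωm i := fun i => hi₀ i (Finset.mem_univ i)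
  set ε := (τ - ν) * m with hε
  have hεpos : 0 < ε := mul_pos (by linarith) hmpos
  -- every cycle has w-weight at most -ε
  have hcyc : ∀ c, IsCycleList E c → cycleWeight w c ≤ -ε := by
    intro c hc
    set L := c.zip (c.rotate 1) with hL
    have hLlen : L.length = c.length := by
      rw [hL, List.length_zip, List.length_rotate, min_self]
    have hLne : L ≠ [] := by
      intro h
      apply hc.1
      rw [← List.length_eq_zero_iff, ← hLlen, h, List.length_nil]
    have hb_ge : (1 : ℝ) * m ≤ cycleWeight (fun i _ => ωm i) c := by
      have h1 : (L.map fun p => ωm p.1).length • m ≤ (L.map fun p => ωm p.1).sum := by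
        apply List.card_nsmul_le_sum
        intro y hy
        simp only [List.mem_map] at hy
        obtain ⟨p, -, rfl⟩ := hy
        exact hmle p.1
      rw [List.length_map] at h1
      have h2 : (1:ℝ) * m ≤ L.length • m := by
        rw [nsmul_eq_mul]
        apply mul_le_mul_of_nonneg_right _ hmpos.le
        have : 1 ≤ L.length := by
          rcases L with - | - <;> simp_all
        exact_mod_cast this
      exact le_trans h2 h1
    have hb_pos : 0 < cycleWeight (fun i _ => ωm i) c := by
      have := hb_ge; linarith
    have hratio : cycleWeight ωp c / cycleWeight (fun i _ => ωm i) c ≤ ν := by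
      apply hν.2
      exact ⟨c, hc, rfl⟩
    have ha_le : cycleWeight ωp c ≤ ν * cycleWeight (fun i _ => ωm i) c := by
      rw [div_le_iff₀ hb_pos] at hratio
      linarith
    have hsplit : cycleWeight w c
        = cycleWeight ωp c - τ * cycleWeight (fun i _ => ωm i) c := by
      rw [hw]
      exact cycleWeight_sub τ ωp ωm c
    rw [hsplit]
    have : cycleWeight ωp c - τ * cycleWeight (fun i _ => ωm i) c
        ≤ (ν - τ) * cycleWeight (fun i _ => ωm i) c := by linarith
    apply le_trans this
    have h2 : (ν - τ) * cycleWeight (fun i _ => ωm i) c ≤ (ν - τ) * (1 * m) := by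
      apply mul_le_mul_of_nonpos_left _ (by linarith)
      exact hb_ge
    rw [hε]; linarith
  -- bound W on the weights
  set W : ℝ := ∑ i : Fin M, ∑ j : Fin M, |w i j| with hW
  have hWnn : 0 ≤ W := Finset.sum_nonneg fun i _ => Finset.sum_nonneg fun j _ => abs_nonneg _
  have hwle : ∀ i j, w i j ≤ W := by
    intro i j
    calc w i j ≤ |w i j| := le_abs_self _
      _ ≤ ∑ j' : Fin M, |w i j'| := Finset.single_le_sum (f := fun j' => |w i j'|) (fun j' _ => abs_nonneg _) (Finset.mem_univ j)
      _ ≤ W := Finset.single_le_sum (f := fun i' => ∑ j' : Fin M, |w i' j'|)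
          (fun i' _ => Finset.sum_nonneg fun j' _ => abs_nonneg _) (Finset.mem_univ i)
  -- positivity of the `P`-product norms
  have hQprod : ∀ i j : Fin M, (P j)⁻¹ * P i * ((P i)⁻¹ * P j) = 1 := by
    intro i j
    calc (P j)⁻¹ * P i * ((P i)⁻¹ * P j)
        = (P j)⁻¹ * (P i * (P i)⁻¹) * P j := by noncomm_ring
      _ = 1 := by rw [Matrix.mul_nonsing_inv _ (hPdet i), mul_one,
            Matrix.nonsing_inv_mul _ (hPdet j)]
  have hQpos : ∀ i j : Fin M, 0 < ‖(P j)⁻¹ * P i‖ := by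
    intro i j
    rw [norm_pos_iff]
    intro h0
    have h1 := hQprod i j
    rw [h0, zero_mul] at h1
    have h2 := congrFun (congrFun h1 ⟨0, hN⟩) ⟨0, hN⟩
    simp [Matrix.one_apply] at h2
  -- the complexified trajectory
  set xc : ℕ → Fin N → ℂ := fun u n => ((x u n : ℝ) : ℂ) with hxcdef
  -- powers of the subsystem matrices over sojourn intervals
  have hpow : ∀ (i : Fin M) (u d : ℕ), (∀ v, v < d → σ (u + v) = i) →
      x (u + d) = ((A i) ^ d).mulVec (x u) := by
    intro i u d
    induction d with
    | zero => intro _; simp [Matrix.one_mulVec]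
    | succ d ih =>
      intro h
      have hσd : σ (u + d) = i := h d (Nat.lt_succ_self d)
      have h1 : x (u + (d + 1)) = (A i).mulVec (x (u + d)) := by
        rw [← Nat.add_assoc, hx (u + d), hσd]
      rw [h1, ih (fun v hv => h v (Nat.lt_succ_of_lt hv)), Matrix.mulVec_mulVec, ← pow_succ']
  -- complexified segment dynamics
  have hmat : ∀ (i : Fin M) (d : ℕ),
      ((A i) ^ d).map Complex.ofReal = P i * (J i) ^ d * (P i)⁻¹ := by
    intro i d
    rw [map_pow_ofReal, hdecomp i, conj_pow _ _ (hPdet i)]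
  have hseg : ∀ k u', t k ≤ u' → u' ≤ t (k + 1) →
      xc u' = (P (s (k + 1)) * (J (s (k + 1))) ^ (u' - t k) * (P (s (k + 1)))⁻¹).mulVec
        (xc (t k)) := by
    intro k u' h1 h2
    have hd : u' = t k + (u' - t k) := by omega
    have hx' : x u' = ((A (s (k + 1))) ^ (u' - t k)).mulVec (x (t k)) := by
      have h3 := hpow (s (k + 1)) (t k) (u' - t k)
        (fun v hv => hσ k (t k + v) (Nat.le_add_right _ _) (by omega))
      rw [← hd] at h3; exact h3
    rw [← hmat]
    have h4 := mulVec_map_ofReal ((A (s (k + 1))) ^ (u' - t k)) (x (t k))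
    funext n
    show ((x u' n : ℝ) : ℂ) = _
    rw [hx']
    exact (congrFun h4 n).symm
  -- the Euclidean norm on complex vectors
  set nE : (Fin N → ℂ) → ℝ := fun v => ‖(EuclideanSpace.equiv (Fin N) ℂ).symm v‖ with hnE
  have nE_nonneg : ∀ v, 0 ≤ nE v := fun v => norm_nonneg _
  have nE_mulVec : ∀ (B : Matrix (Fin N) (Fin N) ℂ) v, nE (B.mulVec v) ≤ ‖B‖ * nE v := by
    intro B v
    exact B.l2_opNorm_mulVec ((EuclideanSpace.equiv (Fin N) ℂ).symm v)
  have nE_coord : ∀ (v : Fin N → ℂ) (i : Fin N), ‖v i‖ ≤ nE v := by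
    intro v i
    show ‖v i‖ ≤ ‖(EuclideanSpace.equiv (Fin N) ℂ).symm v‖
    calc ‖v i‖ = Real.sqrt (‖v i‖ ^ 2) := (Real.sqrt_sq (norm_nonneg _)).symm
      _ ≤ Real.sqrt (∑ j, ‖((EuclideanSpace.equiv (Fin N) ℂ).symm v) j‖ ^ 2) :=
          Real.sqrt_le_sqrt (Finset.single_le_sum
            (f := fun j => ‖((EuclideanSpace.equiv (Fin N) ℂ).symm v) j‖ ^ 2)
            (fun j _ => sq_nonneg _) (Finset.mem_univ i))
      _ = ‖(EuclideanSpace.equiv (Fin N) ℂ).symm v‖ := (EuclideanSpace.norm_eq _).symm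
  -- the transformed state
  set z : ℕ → Fin N → ℂ := fun k => ((P (s (k + 1)))⁻¹).mulVec (xc (t k)) with hzdef
  have hz : ∀ k, z (k + 1) =
      (((P (s (k + 2)))⁻¹ * P (s (k + 1))) * (J (s (k + 1))) ^ (t (k + 1) - t k)).mulVec
        (z k) := by
    intro k
    have h1 := hseg k (t (k + 1)) (htmono (Nat.lt_succ_self k)).le le_rfl
    show ((P (s (k + 2)))⁻¹).mulVec (xc (t (k + 1))) = _
    rw [h1, hzdef]
    simp only [Matrix.mulVec_mulVec]
    congr 1
    noncomm_ring
  -- per-step factor bound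
  have htpos : ∀ k, 0 < t (k + 1) - t k := fun k =>
    Nat.sub_pos_of_lt (htmono (Nat.lt_succ_self k))
  have hfac : ∀ k, ‖(P (s (k + 2)))⁻¹ * P (s (k + 1))‖ *
      ‖J (s (k + 1))‖ ^ (t (k + 1) - t k) ≤ Real.exp (w (s (k + 1)) (s (k + 2))) := by
    intro k
    have h1 : ‖(P (s (k + 2)))⁻¹ * P (s (k + 1))‖ = Real.exp (ωp (s (k + 1)) (s (k + 2))) :=
      (Real.exp_log (hQpos _ _)).symm
    have h2 : ‖J (s (k + 1))‖ ^ (t (k + 1) - t k)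
        = Real.exp ((t (k + 1) - t k : ℕ) * Real.log ‖J (s (k + 1))‖) := by
      rw [Real.exp_nat_mul, Real.exp_log (hJpos _)]
    have h3 : ((t (k + 1) - t k : ℕ) : ℝ) * Real.log ‖J (s (k + 1))‖
        ≤ τ * Real.log ‖J (s (k + 1))‖ :=
      mul_le_mul_of_nonpos_right (hdwell k) (Real.log_nonpos (hJpos _).le (hJ _).le)
    rw [h1, h2, ← Real.exp_add]
    apply Real.exp_le_exp.2
    have h4 : w (s (k + 1)) (s (k + 2))
        = ωp (s (k + 1)) (s (k + 2)) + τ * Real.log ‖J (s (k + 1))‖ := by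
      rw [hw]; show _ - τ * ωm _ = _
      rw [hωm]; ring
    rw [h4]
    linarith
  -- one-step norm estimate
  have hstep : ∀ k, nE (z (k + 1)) ≤ Real.exp (w (s (k + 1)) (s (k + 2))) * nE (z k) := by
    intro k
    calc nE (z (k + 1)) ≤ ‖((P (s (k + 2)))⁻¹ * P (s (k + 1))) *
          (J (s (k + 1))) ^ (t (k + 1) - t k)‖ * nE (z k) := by
          rw [hz k]; exact nE_mulVec _ _
      _ ≤ (‖(P (s (k + 2)))⁻¹ * P (s (k + 1))‖ * ‖(J (s (k + 1))) ^ (t (k + 1) - t k)‖)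
            * nE (z k) := by
          apply mul_le_mul_of_nonneg_right (Matrix.l2_opNorm_mul _ _) (nE_nonneg _)
      _ ≤ (‖(P (s (k + 2)))⁻¹ * P (s (k + 1))‖ * ‖J (s (k + 1))‖ ^ (t (k + 1) - t k))
            * nE (z k) := by
          apply mul_le_mul_of_nonneg_right _ (nE_nonneg _)
          exact mul_le_mul_of_nonneg_left (norm_pow_le' _ (htpos k)) (norm_nonneg _)
      _ ≤ Real.exp (w (s (k + 1)) (s (k + 2))) * nE (z k) :=
          mul_le_mul_of_nonneg_right (hfac k) (nE_nonneg _)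
  -- iterated estimate
  have hiter : ∀ k, nE (z k) ≤ nE (z 0) *
      Real.exp (∑ j ∈ Finset.range k, w (s (j + 1)) (s (j + 2))) := by
    intro k
    induction k with
    | zero => simp
    | succ k ih =>
      calc nE (z (k + 1)) ≤ Real.exp (w (s (k + 1)) (s (k + 2))) * nE (z k) := hstep k
        _ ≤ Real.exp (w (s (k + 1)) (s (k + 2))) *
              (nE (z 0) * Real.exp (∑ j ∈ Finset.range k, w (s (j + 1)) (s (j + 2)))) :=
            mul_le_mul_of_nonneg_left ih (Real.exp_pos _).le
        _ = nE (z 0) * Real.exp (∑ j ∈ Finset.range (k + 1), w (s (j + 1)) (s (j + 2))) := by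
            rw [Finset.sum_range_succ, Real.exp_add]; ring
  -- the walk bound on the exponent
  have hMR : (0 : ℝ) < M := by exact_mod_cast hM
  have hsum : ∀ k, ∑ j ∈ Finset.range k, w (s (j + 1)) (s (j + 2))
      ≤ M * W + ε - ε * (k + 1) / M := by
    intro k
    have hchain : List.Chain' E ((List.range (k + 1)).map (fun j => s (j + 1))) := by
      simp only [List.Chain']
      rw [List.isChain_map, List.isChain_range_succ]
      intro m _
      exact hrespect m
    have hb := walk_bound hM E w hwle hWnn hεpos hcyc
      ((List.range (k + 1)).map (fun j => s (j + 1))).length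
      ((List.range (k + 1)).map (fun j => s (j + 1))) rfl hchain
    rw [edgeSum_map_range w k (fun j => s (j + 1))] at hb
    have hlen : (((List.range (k + 1)).map (fun j => s (j + 1))).length : ℝ) = (k + 1 : ℝ) := by
      simp
    rw [hlen] at hb
    exact hb
  -- convergence of `z`
  have hzbound : ∀ k, nE (z k) ≤ nE (z 0) * Real.exp (M * W + ε - ε * (k + 1) / M) := by
    intro k
    calc nE (z k) ≤ nE (z 0) *
          Real.exp (∑ j ∈ Finset.range k, w (s (j + 1)) (s (j + 2))) := hiter k
      _ ≤ nE (z 0) * Real.exp (M * W + ε - ε * (k + 1) / M) :=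
          mul_le_mul_of_nonneg_left (Real.exp_le_exp.2 (hsum k)) (nE_nonneg _)
  have hexp : Filter.Tendsto (fun k : ℕ => Real.exp (M * W + ε - ε * (k + 1) / M))
      Filter.atTop (nhds 0) := by
    apply Real.tendsto_exp_atBot.comp
    have h1 : Filter.Tendsto (fun k : ℕ => ((k : ℝ) + 1)) Filter.atTop Filter.atTop :=
      Filter.tendsto_atTop_add_const_right _ 1 tendsto_natCast_atTop_atTop
    have h2 : Filter.Tendsto (fun k : ℕ => ((k : ℝ) + 1) * (ε / M)) Filter.atTop
        Filter.atTop := h1.atTop_mul_const (div_pos hεpos hMR)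
    have h3 : Filter.Tendsto (fun k : ℕ => -(((k : ℝ) + 1) * (ε / M))) Filter.atTop
        Filter.atBot := Filter.tendsto_neg_atTop_atBot.comp h2
    have h4 := Filter.tendsto_atBot_add_const_left Filter.atTop (M * W + ε) h3
    apply h4.congr
    intro k
    field_simp
    ring
  have hztend : Filter.Tendsto (fun k => nE (z k)) Filter.atTop (nhds 0) :=
    squeeze_zero (fun k => nE_nonneg _) hzbound (by simpa using hexp.const_mul (nE (z 0)))
  -- convergence at the switching times
  have hPsum : ∀ i : Fin M, ‖P i‖ ≤ ∑ i' : Fin M, ‖P i'‖ := fun i =>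
    Finset.single_le_sum (f := fun i' => ‖P i'‖) (fun i' _ => norm_nonneg _) (Finset.mem_univ i)
  have hxt : ∀ k, nE (xc (t k)) ≤ (∑ i' : Fin M, ‖P i'‖) * nE (z k) := by
    intro k
    have h1 : xc (t k) = (P (s (k + 1))).mulVec (z k) := by
      rw [hzdef]
      simp only [Matrix.mulVec_mulVec]
      rw [Matrix.mul_nonsing_inv _ (hPdet _), Matrix.one_mulVec]
    calc nE (xc (t k)) ≤ ‖P (s (k + 1))‖ * nE (z k) := by
          rw [h1]; exact nE_mulVec _ _
      _ ≤ (∑ i' : Fin M, ‖P i'‖) * nE (z k) :=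
          mul_le_mul_of_nonneg_right (hPsum _) (nE_nonneg _)
  have hxttend : Filter.Tendsto (fun k => nE (xc (t k))) Filter.atTop (nhds 0) := by
    apply squeeze_zero (fun k => nE_nonneg _) hxt
    simpa using hztend.const_mul (∑ i' : Fin M, ‖P i'‖)
  -- bound within an interval
  set CC : ℝ := (∑ i : Fin M, ‖P i‖ * ‖(P i)⁻¹‖) + 1 with hCC
  have hCC1 : (1 : ℝ) ≤ CC := by
    rw [hCC]
    have : (0 : ℝ) ≤ ∑ i : Fin M, ‖P i‖ * ‖(P i)⁻¹‖ :=
      Finset.sum_nonneg fun i _ => mul_nonneg (norm_nonneg _) (norm_nonneg _)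
    linarith
  have hCCi : ∀ i : Fin M, ‖P i‖ * ‖(P i)⁻¹‖ ≤ CC := by
    intro i
    rw [hCC]
    have := Finset.single_le_sum (f := fun i' => ‖P i'‖ * ‖(P i')⁻¹‖)
      (fun i' _ => mul_nonneg (norm_nonneg _) (norm_nonneg _)) (Finset.mem_univ i)
    linarith
  have hint : ∀ u k, t k ≤ u → u < t (k + 1) → nE (xc u) ≤ CC * nE (xc (t k)) := by
    intro u k h1 h2
    rcases Nat.eq_zero_or_pos (u - t k) with hd | hd
    · have hu : u = t k := by omega
      rw [hu]
      calc nE (xc (t k)) = 1 * nE (xc (t k)) := (one_mul _).symm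
        _ ≤ CC * nE (xc (t k)) := mul_le_mul_of_nonneg_right hCC1 (nE_nonneg _)
    · have h3 := hseg k u h1 h2.le
      set i := s (k + 1)
      calc nE (xc u) ≤ ‖P i * (J i) ^ (u - t k) * (P i)⁻¹‖ * nE (xc (t k)) := by
            rw [h3]; exact nE_mulVec _ _
        _ ≤ CC * nE (xc (t k)) := by
            apply mul_le_mul_of_nonneg_right _ (nE_nonneg _)
            calc ‖P i * (J i) ^ (u - t k) * (P i)⁻¹‖
                ≤ ‖P i * (J i) ^ (u - t k)‖ * ‖(P i)⁻¹‖ := Matrix.l2_opNorm_mul _ _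
              _ ≤ (‖P i‖ * ‖(J i) ^ (u - t k)‖) * ‖(P i)⁻¹‖ :=
                  mul_le_mul_of_nonneg_right (Matrix.l2_opNorm_mul _ _) (norm_nonneg _)
              _ ≤ (‖P i‖ * ‖J i‖ ^ (u - t k)) * ‖(P i)⁻¹‖ :=
                  mul_le_mul_of_nonneg_right
                    (mul_le_mul_of_nonneg_left (norm_pow_le' _ hd) (norm_nonneg _))
                    (norm_nonneg _)
              _ ≤ (‖P i‖ * 1) * ‖(P i)⁻¹‖ := by
                  apply mul_le_mul_of_nonneg_right _ (norm_nonneg _)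
                  exact mul_le_mul_of_nonneg_left
                    (pow_le_one₀ (norm_nonneg _) (hJ i).le) (norm_nonneg _)
              _ = ‖P i‖ * ‖(P i)⁻¹‖ := by ring
              _ ≤ CC := hCCi i
  -- convergence of the full complexified trajectory
  have hfull : Filter.Tendsto (fun u => nE (xc u)) Filter.atTop (nhds 0) := by
    rw [Metric.tendsto_atTop]
    intro δ hδ
    have h2 : Filter.Tendsto (fun k => CC * nE (xc (t k))) Filter.atTop (nhds 0) := by
      simpa using hxttend.const_mul CC
    obtain ⟨K, hK⟩ := Metric.tendsto_atTop.1 h2 δ hδ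
    refine ⟨t K, fun u hu => ?_⟩
    obtain ⟨k, hk1, hk2⟩ := exists_interval ht0 htmono u
    have hkK : K ≤ k := by
      by_contra hlt
      push_neg at hlt
      have : t (k + 1) ≤ t K := htmono.monotone (by omega)
      omega
    have h5 := hK k hkK
    rw [Real.dist_eq, sub_zero] at h5 ⊢
    have h6 := hint u k hk1 hk2
    calc |nE (xc u)| = nE (xc u) := abs_of_nonneg (nE_nonneg _)
      _ ≤ CC * nE (xc (t k)) := h6
      _ ≤ |CC * nE (xc (t k))| := le_abs_self _
      _ < δ := h5
  -- conclude, coordinatewise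
  rw [tendsto_pi_nhds]
  intro i
  simp only [Pi.zero_apply]
  apply squeeze_zero_norm (a := fun u => nE (xc u)) _ hfull
  intro u
  calc ‖x u i‖ = ‖((x u i : ℝ) : ℂ)‖ := by rw [Complex.norm_real]
    _ ≤ nE (xc u) := nE_coord (xc u) i
end
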